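/- arXiv:1605.03218 — 7 statements merged into one kernel-verified Lean document; each statement's English description precedes it below -/
import Mathlib

section
/- The Camassa–Holm kernel A(x,y) := (1/2) sgn(x−y) e^{−|x−y|} and the Hunter–Saxton kernel B(x,y) := 𝟙_{(−∞,x]}(y) satisfy Assumptions 1: (i) for all x₁ < x₂ and all y ∈ ℝ, A(x₂,y) − A(x₁,y) ≥ −(x₂ − x₁) (i.e., the difference quotients of A in the first variable are bounded below by −1) and B(x₂,y) − B(x₁,y) ≥ 0; (ii) for every f ∈ L¹(ℝ), the maps x ↦ ∫_ℝ A(x,y) f(y) dy and x ↦ ∫_ℝ B(x,y) f(y) dy are continuous on ℝ. -/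
open MeasureTheory Set

lemma measurable_realSign : Measurable Real.sign := by
  have : Real.sign = fun r : ℝ => if r < 0 then (-1:ℝ) else if 0 < r then 1 else 0 := by
    funext r; rfl
  rw [this]
  exact Measurable.ite (measurableSet_lt measurable_id measurable_const)
    measurable_const
    (Measurable.ite (measurableSet_lt measurable_const measurable_id)
      measurable_const measurable_const)

lemma key_ineq (a b : ℝ) (hab : a < b) :
    (1 / 2) * Real.sign b * Real.exp (-|b|)
      - (1 / 2) * Real.sign a * Real.exp (-|a|) ≥ -(b - a) := by
  rcases lt_trichotomy b 0 with hb | hb | hb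
  · -- a < b < 0
    have ha : a < 0 := hab.trans hb
    rw [Real.sign_of_neg hb, Real.sign_of_neg ha, abs_of_neg hb, abs_of_neg ha]
    simp only [neg_neg]
    have h1 : Real.exp a ≥ Real.exp b * (1 + (a - b)) := by
      have := Real.add_one_le_exp (a - b)
      calc Real.exp b * (1 + (a - b)) ≤ Real.exp b * Real.exp (a - b) := by
            nlinarith [Real.exp_pos b]
        _ = Real.exp a := by rw [← Real.exp_add]; ring_nf
    have h2 : Real.exp b ≤ 1 := Real.exp_le_one_iff.mpr hb.le
    nlinarith [Real.exp_pos b]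
  · -- b = 0, a < 0
    subst hb
    have ha : a < 0 := hab
    rw [Real.sign_zero, Real.sign_of_neg ha, abs_of_neg ha]
    simp only [neg_neg]
    nlinarith [Real.exp_pos a]
  · rcases lt_trichotomy a 0 with ha | ha | ha
    · -- a < 0 < b
      rw [Real.sign_of_pos hb, Real.sign_of_neg ha, abs_of_pos hb, abs_of_neg ha]
      simp only [neg_neg]
      nlinarith [Real.exp_pos a, Real.exp_pos (-b)]
    · -- a = 0 < b
      subst ha
      rw [Real.sign_of_pos hb, Real.sign_zero, abs_of_pos hb]
      nlinarith [Real.exp_pos (-b)]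
    · -- 0 < a < b
      rw [Real.sign_of_pos hb, Real.sign_of_pos ha, abs_of_pos hb, abs_of_pos ha]
      have h1 : Real.exp (-b) ≥ Real.exp (-a) * (1 + (a - b)) := by
        have := Real.add_one_le_exp (a - b)
        calc Real.exp (-a) * (1 + (a - b)) ≤ Real.exp (-a) * Real.exp (a - b) := by
              nlinarith [Real.exp_pos (-a)]
          _ = Real.exp (-b) := by rw [← Real.exp_add]; ring_nf
      have h2 : Real.exp (-a) ≤ 1 := Real.exp_le_one_iff.mpr (by linarith)
      nlinarith [Real.exp_pos (-a)]

lemma cont_int {K : ℝ → ℝ → ℝ} (f : ℝ → ℝ) (hf : Integrable f)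
    (hmeas : ∀ x, AEStronglyMeasurable (fun y => K x y * f y) volume)
    (hbound : ∀ x y, |K x y| ≤ 1)
    (hcont : ∀ x₀ : ℝ, ∀ᵐ y : ℝ, ContinuousAt (fun x => K x y) x₀) :
    Continuous fun x => ∫ y : ℝ, K x y * f y := by
  rw [continuous_iff_continuousAt]
  intro x₀
  refine MeasureTheory.tendsto_integral_filter_of_dominated_convergence
    (fun y => |f y|) (Filter.Eventually.of_forall hmeas) ?_ hf.abs ?_
  · refine Filter.Eventually.of_forall fun x => Filter.Eventually.of_forall fun y => ?_
    rw [Real.norm_eq_abs, abs_mul]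
    calc |K x y| * |f y| ≤ 1 * |f y| := by
          exact mul_le_mul_of_nonneg_right (hbound x y) (abs_nonneg _)
      _ = |f y| := one_mul _
  · filter_upwards [hcont x₀] with y hy
    exact (hy.mul continuousAt_const)

/-- The Camassa–Holm kernel `A(x,y) = (1/2) sgn(x−y) e^{−|x−y|}` and the
Hunter–Saxton kernel `B(x,y) = 𝟙_{(−∞,x]}(y)` satisfy Assumptions 1: their difference
quotients in the first variable are bounded below by `−1` resp. `0`, and the maps
`x ↦ ∫ A(x,y) f(y) dy`, `x ↦ ∫ B(x,y) f(y) dy` are continuous for every `f ∈ L¹(ℝ)`. -/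
theorem camassaHolm_hunterSaxton_kernels_satisfy_assumptions :
    (∀ x₁ x₂ y : ℝ, x₁ < x₂ →
      (1 / 2) * Real.sign (x₂ - y) * Real.exp (-|x₂ - y|)
        - (1 / 2) * Real.sign (x₁ - y) * Real.exp (-|x₁ - y|) ≥ -(x₂ - x₁)) ∧
    (∀ x₁ x₂ y : ℝ, x₁ < x₂ →
      (Iic x₂).indicator (fun _ => (1:ℝ)) y - (Iic x₁).indicator (fun _ => (1:ℝ)) y ≥ 0) ∧
    (∀ f : ℝ → ℝ, Integrable f →
      Continuous (fun x => ∫ y : ℝ,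
        (1 / 2) * Real.sign (x - y) * Real.exp (-|x - y|) * f y)) ∧
    (∀ f : ℝ → ℝ, Integrable f →
      Continuous (fun x => ∫ y : ℝ, (Iic x).indicator (fun _ => (1:ℝ)) y * f y)) := by
  refine ⟨fun x₁ x₂ y h => ?_, fun x₁ x₂ y h => ?_, fun f hf => ?_, fun f hf => ?_⟩
  · have := key_ineq (x₁ - y) (x₂ - y) (by linarith)
    have h2 : x₂ - y - (x₁ - y) = x₂ - x₁ := by ring
    rw [h2] at this
    exact this
  · by_cases hy : y ≤ x₁
    · rw [indicator_of_mem (mem_Iic.mpr hy), indicator_of_mem (mem_Iic.mpr (hy.trans h.le))]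
      simp
    · rw [indicator_of_notMem (fun hc => hy (mem_Iic.mp hc))]
      simp only [sub_zero]
      exact indicator_nonneg (fun _ _ => zero_le_one) y
  · refine cont_int (K := fun x y => (1 / 2) * Real.sign (x - y) * Real.exp (-|x - y|)) f hf
      (fun x => ?_) (fun x y => ?_) (fun x₀ => ?_)
    · refine (Measurable.aestronglyMeasurable ?_).mul hf.1
      exact (((measurable_realSign.comp (measurable_const.sub measurable_id)).const_mul
        (1/2)).mul ((measurable_const.sub measurable_id).abs.neg.exp))
    · have h0 : |(1:ℝ)/2| = 1/2 := by norm_num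
      rw [abs_mul, abs_mul, h0]
      have h1 : |Real.sign (x - y)| ≤ 1 := by
        rcases lt_trichotomy (x - y) 0 with h | h | h
        · rw [Real.sign_of_neg h]; norm_num
        · rw [h, Real.sign_zero]; norm_num
        · rw [Real.sign_of_pos h]; norm_num
      have h2 : |Real.exp (-|x - y|)| ≤ 1 := by
        rw [abs_of_pos (Real.exp_pos _)]
        exact Real.exp_le_one_iff.mpr (neg_nonpos.mpr (abs_nonneg _))
      nlinarith [abs_nonneg (Real.sign (x-y)), abs_nonneg (Real.exp (-|x-y|))]
    · have hmeas : ∀ᵐ y : ℝ, y ≠ x₀ := by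
        rw [ae_iff]
        simp only [not_not]
        exact Real.volume_singleton
      filter_upwards [hmeas] with y hy
      have hne : x₀ - y ≠ 0 := sub_ne_zero.mpr (Ne.symm hy)
      have hsign : ∀ᶠ x in nhds x₀, Real.sign (x - y) = Real.sign (x₀ - y) := by
        rcases hne.lt_or_gt with h | h
        · have : ∀ᶠ x in nhds x₀, x - y < 0 := by
            have : ContinuousAt (fun x => x - y) x₀ := continuousAt_id.sub continuousAt_const
            exact this.eventually_lt continuousAt_const h
          filter_upwards [this] with x hx
          rw [Real.sign_of_neg hx, Real.sign_of_neg h]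
        · have : ∀ᶠ x in nhds x₀, 0 < x - y := by
            have hc : ContinuousAt (fun x => x - y) x₀ := continuousAt_id.sub continuousAt_const
            exact continuousAt_const.eventually_lt hc h
          filter_upwards [this] with x hx
          rw [Real.sign_of_pos hx, Real.sign_of_pos h]
      have hc1 : ContinuousAt (fun x => Real.sign (x - y)) x₀ :=
        continuousAt_const.congr (hsign.mono fun x hx => hx.symm)
      have hc2 : ContinuousAt (fun x => Real.exp (-|x - y|)) x₀ :=
        (Real.continuous_exp.comp (((continuous_id.sub continuous_const).abs).neg)).continuousAt
      exact (continuousAt_const.mul hc1).mul hc2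
  · refine cont_int (K := fun x y => (Iic x).indicator (fun _ => (1:ℝ)) y) f hf
      (fun x => ?_) (fun x y => ?_) (fun x₀ => ?_)
    · exact ((measurable_const.indicator measurableSet_Iic).aestronglyMeasurable).mul hf.1
    · show |(Iic x).indicator (fun _ => (1:ℝ)) y| ≤ 1
      by_cases hy : y ∈ Iic x
      · rw [indicator_of_mem hy]; norm_num
      · rw [indicator_of_notMem hy]; norm_num
    · have hmeas : ∀ᵐ y : ℝ, y ≠ x₀ := by
        rw [ae_iff]
        simp only [not_not]
        exact Real.volume_singleton
      filter_upwards [hmeas] with y hy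
      rcases hy.lt_or_gt with h | h
      · have hev : ∀ᶠ x in nhds x₀, y ≤ x := by
          filter_upwards [lt_mem_nhds h] with x hx using hx.le
        refine (continuousAt_const (y := (1:ℝ))).congr ?_
        filter_upwards [hev] with x hx
        rw [indicator_of_mem (mem_Iic.mpr hx)]
      · have hev : ∀ᶠ x in nhds x₀, x < y := gt_mem_nhds h
        refine (continuousAt_const (y := (0:ℝ))).congr ?_
        filter_upwards [hev] with x hx
        rw [indicator_of_notMem (fun hc => absurd (mem_Iic.mp hc) (not_le.mpr hx))]
end

section
/- Let T > 0 and let u : [0,T] × ℝ → ℝ be continuous and bounded. Let {x_α}_{α∈A} be a nonempty family of functions on [0,T] satisfying x_α(0) = x and x_α'(t) = u(t, x_α(t)) for all t ∈ [0,T] and all α. Then the function y(t) := sup_{α∈A} x_α(t) is real-valued and Lipschitz continuous on [0,T], and at every t ∈ (0,T) at which y is differentiable one has y'(t) = u(t, y(t)); consequently y(t) = x + ∫₀ᵗ u(s, y(s)) ds for all t ∈ [0,T]. The same conclusions hold for z(t) := inf_{α∈A} x_α(t). -/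
set_option maxHeartbeats 1000000


open MeasureTheory Filter Set Topology

private lemma dev_lemma {f g : ℝ → ℝ} {a b c ε : ℝ} (hab : a ≤ b)
    (hf : ∀ s ∈ Icc a b, HasDerivWithinAt f (g s) (Icc a b) s)
    (hbd : ∀ s ∈ Icc a b, |g s - c| ≤ ε) :
    |f b - f a - c * (b - a)| ≤ ε * (b - a) := by
  have hlin : ∀ s : ℝ, HasDerivAt (fun y : ℝ => c * y) c s := fun s => by
    simpa using (hasDerivAt_id s).const_mul c
  have h := Convex.norm_image_sub_le_of_norm_hasDerivWithin_le
    (f := fun s => f s - c * s) (f' := fun s => g s - c)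
    (fun s hs => (hf s hs).sub ((hlin s).hasDerivWithinAt))
    (fun s hs => by simpa [Real.norm_eq_abs] using hbd s hs)
    (convex_Icc a b) (left_mem_Icc.2 hab) (right_mem_Icc.2 hab)
  rw [Real.norm_eq_abs, Real.norm_eq_abs, abs_of_nonneg (by linarith : (0:ℝ) ≤ b - a)] at h
  have he : f b - f a - c * (b - a) = (f b - c * b) - (f a - c * a) := by ring
  rw [he]
  exact h

private lemma supAux {ι : Type*} [Nonempty ι] {T : ℝ} (hT : 0 ≤ T)
    {u : ℝ → ℝ → ℝ} (hu_cont : Continuous fun p : ℝ × ℝ => u p.1 p.2)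
    {M : ℝ} (hM : ∀ t x : ℝ, |u t x| ≤ M)
    {x₀ : ℝ} {X : ι → ℝ → ℝ} (hX0 : ∀ i, X i 0 = x₀)
    (hX : ∀ i, ∀ t ∈ Icc (0:ℝ) T, HasDerivAt (X i) (u t (X i t)) t) :
    (∀ t ∈ Icc (0:ℝ) T, BddAbove (range fun i => X i t)) ∧
    (∃ K : NNReal, LipschitzOnWith K (fun t => ⨆ i, X i t) (Icc 0 T)) ∧
    (∀ t ∈ Icc (0:ℝ) T, HasDerivWithinAt (fun t => ⨆ i, X i t) (u t (⨆ i, X i t)) (Icc 0 T) t) := by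
  have hM0 : 0 ≤ M := le_trans (abs_nonneg _) (hM 0 0)
  have hXlip : ∀ i, ∀ a ∈ Icc (0:ℝ) T, ∀ b ∈ Icc (0:ℝ) T, |X i b - X i a| ≤ M * |b - a| := by
    intro i a ha b hb
    have h := Convex.norm_image_sub_le_of_norm_hasDerivWithin_le
      (f := X i) (f' := fun s => u s (X i s))
      (fun s hs => (hX i s hs).hasDerivWithinAt)
      (fun s hs => by simpa [Real.norm_eq_abs] using hM s (X i s))
      (convex_Icc 0 T) ha hb
    simpa [Real.norm_eq_abs] using h
  have hbdd : ∀ t ∈ Icc (0:ℝ) T, BddAbove (range fun i => X i t) := by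
    intro t ht
    refine ⟨x₀ + M * T, fun w hw => ?_⟩
    obtain ⟨i, rfl⟩ := hw
    have h1 := (abs_le.1 (hXlip i 0 ⟨le_rfl, hT⟩ t ht)).2
    rw [hX0 i] at h1
    have h2 : |t - 0| ≤ T := by rw [sub_zero, abs_of_nonneg ht.1]; exact ht.2
    have h3 : M * |t - 0| ≤ M * T := mul_le_mul_of_nonneg_left h2 hM0
    linarith
  set y : ℝ → ℝ := fun t => ⨆ i, X i t with hy_def
  have hle : ∀ t ∈ Icc (0:ℝ) T, ∀ i, X i t ≤ y t := fun t ht i => le_ciSup (hbdd t ht) i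
  have hylip : ∀ a ∈ Icc (0:ℝ) T, ∀ b ∈ Icc (0:ℝ) T, y b - y a ≤ M * |b - a| := by
    intro a ha b hb
    rw [sub_le_iff_le_add]
    refine ciSup_le fun i => ?_
    have h1 := (abs_le.1 (hXlip i a ha b hb)).2
    have h2 := hle a ha i
    linarith
  have hlip : LipschitzOnWith M.toNNReal y (Icc 0 T) := by
    rw [lipschitzOnWith_iff_dist_le_mul]
    intro s hs t ht
    rw [Real.dist_eq, Real.dist_eq, Real.coe_toNNReal M hM0]
    have h1 := hylip t ht s hs
    have h2 := hylip s hs t ht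
    rw [abs_sub_comm t s] at h2
    exact abs_sub_le_iff.2 ⟨h1, h2⟩
  refine ⟨hbdd, ⟨M.toNNReal, hlip⟩, ?_⟩
  intro t₀ ht₀
  set c := u t₀ (y t₀) with hc
  rw [hasDerivWithinAt_iff_tendsto_slope, Metric.tendsto_nhds]
  intro ε' hε'
  set ε := ε' / 4 with hεdef
  have hε : 0 < ε := by positivity
  obtain ⟨δ, hδ, hδ'⟩ : ∃ δ > 0, ∀ s v : ℝ, |s - t₀| < δ → |v - y t₀| < δ → |u s v - c| ≤ ε := by
    have hcont := hu_cont.continuousAt (x := (t₀, y t₀))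
    rw [Metric.continuousAt_iff] at hcont
    obtain ⟨δ, hδ, hd⟩ := hcont ε hε
    refine ⟨δ, hδ, fun s v h1 h2 => ?_⟩
    have hlt := hd (x := (s, v))
      (by rw [Prod.dist_eq]
          exact max_lt (by simpa [Real.dist_eq] using h1) (by simpa [Real.dist_eq] using h2))
    exact le_of_lt (by simpa [Real.dist_eq] using hlt)
  set r := δ / (8 * (M + |c| + ε + 1)) with hr_def
  have hden : (0:ℝ) < 8 * (M + |c| + ε + 1) := by positivity
  have hr : 0 < r := div_pos hδ hden
  have hrδ : 8 * (M + |c| + ε + 1) * r = δ := by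
    rw [hr_def]; field_simp
  have habs : 0 ≤ |c| := abs_nonneg c
  have hrlt : r < δ := by nlinarith
  have hynear : ∀ a ∈ Icc (0:ℝ) T, |a - t₀| ≤ r → |y a - y t₀| ≤ M * r := by
    intro a ha har
    have h1 := hylip t₀ ht₀ a ha
    have h2 := hylip a ha t₀ ht₀
    rw [abs_sub_comm t₀ a] at h2
    have h3 : M * |a - t₀| ≤ M * r := mul_le_mul_of_nonneg_left har hM0
    exact abs_sub_le_iff.2 ⟨by linarith, by linarith⟩
  have hdev : ∀ (i : ι), ∀ a ∈ Icc (0:ℝ) T, ∀ b ∈ Icc (0:ℝ) T, a ≤ b →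
      |a - t₀| ≤ r → |b - t₀| ≤ r → |X i a - y t₀| ≤ (3*M + |c| + 2*ε) * (2*r) →
      |X i b - X i a - c * (b - a)| ≤ ε * (b - a) := by
    intro i a ha b hb hab hat hbt hclose
    have hba : b - a ≤ 2 * r := by
      have h1 := (abs_le.1 hat).1
      have h2 := (abs_le.1 hbt).2
      linarith
    refine dev_lemma (g := fun s => u s (X i s)) hab (fun s hs => ?_) (fun s hs => ?_)
    · have hsT : s ∈ Icc (0:ℝ) T := ⟨ha.1.trans hs.1, hs.2.trans hb.2⟩
      exact (hX i s hsT).hasDerivWithinAt.mono (Icc_subset_Icc ha.1 hb.2)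
    · have hsT : s ∈ Icc (0:ℝ) T := ⟨ha.1.trans hs.1, hs.2.trans hb.2⟩
      refine hδ' s (X i s) ?_ ?_
      · have h1 : |s - t₀| ≤ r := by
          have h2 := abs_le.1 hat
          have h3 := abs_le.1 hbt
          rw [abs_le]
          exact ⟨by linarith [hs.1], by linarith [hs.2]⟩
        linarith
      · have h1 := (abs_le.1 (hXlip i a ha s hsT)).2
        have h1' := (abs_le.1 (hXlip i a ha s hsT)).1
        have hsa : |s - a| ≤ 2 * r := by
          rw [abs_of_nonneg (by linarith [hs.1] : (0:ℝ) ≤ s - a)]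
          linarith [hs.2]
        have h2 : M * |s - a| ≤ M * (2*r) := mul_le_mul_of_nonneg_left hsa hM0
        have h3 := abs_le.1 hclose
        rw [abs_lt]
        constructor <;> nlinarith
  have hI : ∀ a ∈ Icc (0:ℝ) T, ∀ b ∈ Icc (0:ℝ) T, a ≤ b → |a - t₀| ≤ r → |b - t₀| ≤ r →
      y b ≤ y a + (c + ε) * (b - a) := by
    intro a ha b hb hab hat hbt
    have hba : 0 ≤ b - a := by linarith
    have hba2 : b - a ≤ 2 * r := by
      have h1 := (abs_le.1 hat).1
      have h2 := (abs_le.1 hbt).2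
      linarith
    have hya := hynear a ha hat
    have hya' := abs_le.1 hya
    refine ciSup_le fun i => ?_
    by_cases hcase : y a - (2*M + |c| + ε) * (b - a) ≤ X i a
    · have hXa := hle a ha i
      have hclose : |X i a - y t₀| ≤ (3*M + |c| + 2*ε) * (2*r) := by
        rw [abs_le]
        constructor
        · nlinarith
        · nlinarith
      have h3 := (abs_le.1 (hdev i a ha b hb hab hat hbt hclose)).2
      nlinarith
    · push_neg at hcase
      have h2 := (abs_le.1 (hXlip i a ha b hb)).2
      rw [abs_of_nonneg hba] at h2
      have hkey : ((-M) - |c| - ε) * (b - a) ≤ (c + ε) * (b - a) :=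
        mul_le_mul_of_nonneg_right (by linarith [neg_abs_le c]) hba
      nlinarith
  have hII : ∀ a ∈ Icc (0:ℝ) T, ∀ b ∈ Icc (0:ℝ) T, a ≤ b → |a - t₀| ≤ r → |b - t₀| ≤ r →
      y a + (c - 2*ε) * (b - a) ≤ y b := by
    intro a ha b hb hab hat hbt
    rcases eq_or_lt_of_le hab with rfl | hab'
    · simp
    have hba : 0 < b - a := by linarith
    have hba2 : b - a ≤ 2 * r := by
      have h1 := (abs_le.1 hat).1
      have h2 := (abs_le.1 hbt).2
      linarith
    have hya := abs_le.1 (hynear a ha hat)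
    obtain ⟨i, hi⟩ := exists_lt_of_lt_ciSup
      (show y a - ε * (b - a) < ⨆ i, X i a from by nlinarith)
    have hXa := hle a ha i
    have hclose : |X i a - y t₀| ≤ (3*M + |c| + 2*ε) * (2*r) := by
      rw [abs_le]
      constructor
      · nlinarith
      · nlinarith
    have h3 := (abs_le.1 (hdev i a ha b hb hab hat hbt hclose)).1
    have hXb := hle b hb i
    nlinarith
  have hslope : ∀ t ∈ Icc (0:ℝ) T, t ≠ t₀ → |t - t₀| ≤ r → |slope y t₀ t - c| ≤ 2*ε := by
    intro t ht hne htr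
    have ht₀r : |t₀ - t₀| ≤ r := by simp [hr.le]
    rcases lt_or_gt_of_ne hne with hlt | hgt
    · have h1 := hI t ht t₀ ht₀ hlt.le htr ht₀r
      have h2 := hII t ht t₀ ht₀ hlt.le htr ht₀r
      have hd : 0 < t₀ - t := by linarith
      rw [slope_comm, slope_def_field]
      have hub : (y t₀ - y t) / (t₀ - t) ≤ c + ε := by
        rw [div_le_iff₀ hd]; nlinarith
      have hlb : c - 2*ε ≤ (y t₀ - y t) / (t₀ - t) := by
        rw [le_div_iff₀ hd]; nlinarith
      rw [abs_le]
      constructor <;> [linarith; linarith]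
    · have h1 := hI t₀ ht₀ t ht hgt.le ht₀r htr
      have h2 := hII t₀ ht₀ t ht hgt.le ht₀r htr
      have hd : 0 < t - t₀ := by linarith
      rw [slope_def_field]
      have hub : (y t - y t₀) / (t - t₀) ≤ c + ε := by
        rw [div_le_iff₀ hd]; nlinarith
      have hlb : c - 2*ε ≤ (y t - y t₀) / (t - t₀) := by
        rw [le_div_iff₀ hd]; nlinarith
      rw [abs_le]
      constructor <;> [linarith; linarith]
  have hball : ∀ᶠ t in 𝓝 t₀, dist t t₀ < r := by
    filter_upwards [Metric.ball_mem_nhds t₀ hr] with t ht using Metric.mem_ball.1 ht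
  filter_upwards [hball.filter_mono nhdsWithin_le_nhds, self_mem_nhdsWithin] with t hdist hmem
  obtain ⟨htIcc, htne⟩ := hmem
  have hslope' := hslope t htIcc (by simpa using htne)
    (le_of_lt (by rwa [Real.dist_eq] at hdist))
  rw [Real.dist_eq]
  calc |slope y t₀ t - c| ≤ 2 * ε := hslope'
    _ < ε' := by rw [hεdef]; linarith

private lemma fromDeriv {T : ℝ} {u : ℝ → ℝ → ℝ}
    (hu_cont : Continuous fun p : ℝ × ℝ => u p.1 p.2)
    {y : ℝ → ℝ} (hy : ∀ t ∈ Icc (0:ℝ) T, HasDerivWithinAt y (u t (y t)) (Icc 0 T) t) :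
    (∀ t ∈ Ioo (0:ℝ) T, deriv y t = u t (y t)) ∧
    (∀ t ∈ Icc (0:ℝ) T, y t = y 0 + ∫ s in (0:ℝ)..t, u s (y s)) := by
  have hycont : ContinuousOn y (Icc 0 T) := fun t ht => (hy t ht).continuousWithinAt
  have hgcont : ContinuousOn (fun s => u s (y s)) (Icc 0 T) :=
    hu_cont.comp_continuousOn (continuousOn_id.prodMk hycont)
  constructor
  · intro t ht
    exact ((hy t (Ioo_subset_Icc_self ht)).hasDerivAt (Icc_mem_nhds ht.1 ht.2)).deriv
  · intro t ht
    have h0T : Icc (0:ℝ) t ⊆ Icc 0 T := Icc_subset_Icc le_rfl ht.2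
    have hFTC := intervalIntegral.integral_eq_sub_of_hasDeriv_right_of_le ht.1
      (hycont.mono h0T)
      (fun s hs => ((hy s ⟨hs.1.le, hs.2.le.trans ht.2⟩).hasDerivAt
        (Icc_mem_nhds hs.1 (lt_of_lt_of_le hs.2 ht.2))).hasDerivWithinAt)
      ((hgcont.mono h0T).intervalIntegrable_of_Icc ht.1)
    linarith

/-- Let `u : [0,T] × ℝ → ℝ` be continuous and bounded and let
`{X i}` be a nonempty family of solutions of `ẋ = u(t,x)` on `[0,T]` with common initial
value `x₀` at time `0`. Then `y(t) = ⨆ i, X i t` is real-valued (the range is bounded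
above), Lipschitz on `[0,T]`, satisfies `y' = u(t,y)` at every interior point of
differentiability, and `y(t) = x₀ + ∫₀ᵗ u(s, y(s)) ds`; similarly for
`z(t) = ⨅ i, X i t`. -/
theorem sup_inf_of_characteristics_is_characteristic
    {ι : Type*} [Nonempty ι] (T : ℝ) (hT : 0 < T)
    (u : ℝ → ℝ → ℝ) (hu_cont : Continuous (fun p : ℝ × ℝ => u p.1 p.2))
    (hu_bdd : ∃ M : ℝ, ∀ t x : ℝ, |u t x| ≤ M)
    (x₀ : ℝ) (X : ι → ℝ → ℝ)
    (hX0 : ∀ i, X i 0 = x₀)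
    (hX : ∀ i, ∀ t ∈ Icc (0:ℝ) T, HasDerivAt (X i) (u t (X i t)) t) :
    ((∀ t ∈ Icc (0:ℝ) T, BddAbove (range fun i => X i t)) ∧
      (∃ K : NNReal, LipschitzOnWith K (fun t => ⨆ i, X i t) (Icc 0 T)) ∧
      (∀ t ∈ Ioo (0:ℝ) T, DifferentiableAt ℝ (fun t => ⨆ i, X i t) t →
        deriv (fun t => ⨆ i, X i t) t = u t (⨆ i, X i t)) ∧
      (∀ t ∈ Icc (0:ℝ) T,
        (⨆ i, X i t) = x₀ + ∫ s in (0:ℝ)..t, u s (⨆ i, X i s))) ∧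
    ((∀ t ∈ Icc (0:ℝ) T, BddBelow (range fun i => X i t)) ∧
      (∃ K : NNReal, LipschitzOnWith K (fun t => ⨅ i, X i t) (Icc 0 T)) ∧
      (∀ t ∈ Ioo (0:ℝ) T, DifferentiableAt ℝ (fun t => ⨅ i, X i t) t →
        deriv (fun t => ⨅ i, X i t) t = u t (⨅ i, X i t)) ∧
      (∀ t ∈ Icc (0:ℝ) T,
        (⨅ i, X i t) = x₀ + ∫ s in (0:ℝ)..t, u s (⨅ i, X i s))) := by
  obtain ⟨M, hM⟩ := hu_bdd
  constructor
  · obtain ⟨hbdd, hlip, hkey⟩ := supAux hT.le hu_cont hM hX0 hX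
    obtain ⟨hd, hint⟩ := fromDeriv hu_cont hkey
    have hy0 : (⨆ i, X i 0) = x₀ := by simp [hX0]
    refine ⟨hbdd, hlip, fun t ht _ => hd t ht, fun t ht => ?_⟩
    have := hint t ht
    simpa [hy0] using this
  · -- inf part via negation
    set v : ℝ → ℝ → ℝ := fun t w => -u t (-w) with hv
    have hv_cont : Continuous fun p : ℝ × ℝ => v p.1 p.2 :=
      (hu_cont.comp (continuous_fst.prodMk continuous_snd.neg)).neg
    have hv_bdd : ∀ t x : ℝ, |v t x| ≤ M := fun t x => by
      simpa [hv, abs_neg] using hM t (-x)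
    have hY0 : ∀ i, (fun s => -X i s) 0 = -x₀ := fun i => by simp [hX0]
    have hY : ∀ i, ∀ t ∈ Icc (0:ℝ) T,
        HasDerivAt (fun s => -X i s) (v t ((fun s => -X i s) t)) t := by
      intro i t ht
      simpa [hv] using (hX i t ht).fun_neg
    obtain ⟨hbddY, ⟨K, hlipY⟩, hkeyY⟩ :=
      supAux (X := fun i => fun s => -X i s) hT.le hv_cont hv_bdd hY0 hY
    have hrange : ∀ t : ℝ, (range fun i => -X i t) = -(range fun i => X i t) := by
      intro t
      ext a
      simp only [mem_range, Set.mem_neg, neg_eq_iff_eq_neg]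
    have hzw : ∀ t : ℝ, (⨅ i, X i t) = -⨆ i, -X i t := by
      intro t
      rw [iInf, iSup, Real.sInf_def, hrange t]
    have hzfun : (fun t => ⨅ i, X i t) = fun t => -(⨆ i, -X i t) := funext hzw
    have hbddZ : ∀ t ∈ Icc (0:ℝ) T, BddBelow (range fun i => X i t) := by
      intro t ht
      have h := hbddY t ht
      rw [hrange t] at h
      exact bddAbove_neg.1 h
    have hkeyZ : ∀ t ∈ Icc (0:ℝ) T,
        HasDerivWithinAt (fun t => ⨅ i, X i t) (u t (⨅ i, X i t)) (Icc 0 T) t := by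
      intro t ht
      rw [hzfun, hzw t]
      have h := (hkeyY t ht).fun_neg
      simpa [hv] using h
    obtain ⟨hd, hint⟩ := fromDeriv hu_cont hkeyZ
    have hz0 : (⨅ i, X i 0) = x₀ := by simp [hX0]
    refine ⟨hbddZ, ⟨K, ?_⟩, fun t ht _ => hd t ht, fun t ht => ?_⟩
    · rw [hzfun]
      rw [lipschitzOnWith_iff_dist_le_mul] at hlipY ⊢
      intro s hs t ht
      simpa [dist_neg_neg] using hlipY s hs t ht
    · have := hint t ht
      simpa [hz0] using this
end

section
/- Let K > 0 and let ω : [t₀,t₁] → ℝ be differentiable with ω'(t) ≥ −ω(t)² − K for all t ∈ [t₀,t₁]. If −√K·(t₁−t₀) + arctan(ω(t₀)/√K) > −π/2, then ω(t₁) ≥ √K · tan( −√K·(t₁−t₀) + arctan(ω(t₀)/√K) ). -/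
open Set Real

/-- Riccati comparison estimate: if `ω' ≥ −ω² − K` on `[t₀,t₁]` and the
comparison solution does not blow up, i.e.
`−√K (t₁−t₀) + arctan(ω(t₀)/√K) > −π/2`, then
`ω(t₁) ≥ √K · tan(−√K (t₁−t₀) + arctan(ω(t₀)/√K))`. -/
theorem riccati_comparison_estimate
    (K : ℝ) (hK : 0 < K) (t₀ t₁ : ℝ) (ht : t₀ ≤ t₁)
    (ω ω' : ℝ → ℝ)
    (hderiv : ∀ t ∈ Icc t₀ t₁, HasDerivAt ω (ω' t) t)
    (hineq : ∀ t ∈ Icc t₀ t₁, ω' t ≥ -(ω t) ^ 2 - K)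
    (hcmp : -Real.sqrt K * (t₁ - t₀) + Real.arctan (ω t₀ / Real.sqrt K) > -(π / 2)) :
    ω t₁ ≥ Real.sqrt K *
      Real.tan (-Real.sqrt K * (t₁ - t₀) + Real.arctan (ω t₀ / Real.sqrt K)) := by
  set s := Real.sqrt K with hs_def
  have hs : 0 < s := Real.sqrt_pos.mpr hK
  have hK2 : s ^ 2 = K := Real.sq_sqrt hK.le
  set g : ℝ → ℝ := fun t => Real.arctan (ω t / s) + s * (t - t₀) with hg_def
  have hg : ∀ t ∈ Icc t₀ t₁,
      HasDerivAt g (ω' t / s / (1 + (ω t / s) ^ 2) + s) t := by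
    intro t htmem
    have h1 : HasDerivAt (fun u => ω u / s) (ω' t / s) t :=
      (hderiv t htmem).div_const s
    have h2 := h1.arctan
    have h3 : HasDerivAt (fun u => s * (u - t₀)) s t := by
      simpa using ((hasDerivAt_id t).sub_const t₀).const_mul s
    have h4 := h2.add h3
    refine HasDerivAt.congr_deriv h4 ?_
    ring
  have hnonneg : ∀ t ∈ Icc t₀ t₁, 0 ≤ ω' t / s / (1 + (ω t / s) ^ 2) + s := by
    intro t htmem
    have h1 : (0:ℝ) < 1 + (ω t / s) ^ 2 := by positivity
    have h2 : 0 ≤ ω' t + K + ω t ^ 2 := by have := hineq t htmem; linarith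
    have heq : ω' t / s / (1 + (ω t / s) ^ 2) + s
        = (ω' t + K + ω t ^ 2) / (s * (1 + (ω t / s) ^ 2)) := by
      rw [← hK2]
      field_simp
      ring
    rw [heq]
    positivity
  have hcont : ContinuousOn g (Icc t₀ t₁) := fun t htmem =>
    (hg t htmem).continuousAt.continuousWithinAt
  have hmono : MonotoneOn g (Icc t₀ t₁) := by
    apply monotoneOn_of_deriv_nonneg (convex_Icc t₀ t₁) hcont
    · intro t htmem
      rw [interior_Icc] at htmem
      exact ((hg t (Ioo_subset_Icc_self htmem)).differentiableAt).differentiableWithinAt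
    · intro t htmem
      rw [interior_Icc] at htmem
      rw [(hg t (Ioo_subset_Icc_self htmem)).deriv]
      exact hnonneg t (Ioo_subset_Icc_self htmem)
  have hge : g t₀ ≤ g t₁ :=
    hmono (left_mem_Icc.mpr ht) (right_mem_Icc.mpr ht) ht
  have hθ : -s * (t₁ - t₀) + Real.arctan (ω t₀ / s) ≤ Real.arctan (ω t₁ / s) := by
    simp only [hg_def] at hge
    have : s * (t₀ - t₀) = 0 := by ring
    nlinarith [hge]
  set θ := -s * (t₁ - t₀) + Real.arctan (ω t₀ / s) with hθ_def
  have hθmem : θ ∈ Ioo (-(π/2)) (π/2) :=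
    ⟨hcmp, lt_of_le_of_lt hθ (Real.arctan_lt_pi_div_two _)⟩
  have harc : Real.arctan (ω t₁ / s) ∈ Ioo (-(π/2)) (π/2) :=
    ⟨Real.neg_pi_div_two_lt_arctan _, Real.arctan_lt_pi_div_two _⟩
  have htan : Real.tan θ ≤ Real.tan (Real.arctan (ω t₁ / s)) :=
    Real.strictMonoOn_tan.monotoneOn hθmem harc hθ
  rw [Real.tan_arctan] at htan
  have := mul_le_mul_of_nonneg_left htan hs.le
  rw [mul_div_cancel₀ _ hs.ne'] at this
  exact this
end

section
/- Let t > 0, N > 0, and let u : [0,t] × ℝ → ℝ be continuous and bounded. Let ζ₀ ∈ ℝ and assume that for every η₀ ∈ (ζ₀ − 1/N, ζ₀) ∪ (ζ₀, ζ₀ + 1/N), every characteristic η(·) of u with η(0) = η₀, every characteristic ζ(·) of u with ζ(0) = ζ₀, and every s ∈ [0,t] with η(s) ≠ ζ(s), the difference quotient ω(s) := (u(s,η(s)) − u(s,ζ(s)))/(η(s) − ζ(s)) satisfies −N ≤ ω(s) ≤ N. Then the characteristic of u emanating from ζ₀ is unique on [0,t]: any two characteristics ζ₁(·), ζ₂(·)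 with ζ₁(0) = ζ₂(0) = ζ₀ coincide on [0,t]. -/
open Set
open Filter Topology MeasureTheory intervalIntegral

noncomputable def infConv (u : ℝ → ℝ → ℝ) (K s x : ℝ) : ℝ := ⨅ y : ℝ, (u s y + K * |x - y|)

section InfConv

variable {u : ℝ → ℝ → ℝ} {M K : ℝ}

lemma infConv_bddBelow (hM : ∀ s x, |u s x| ≤ M) (hK : 0 ≤ K) (s x : ℝ) :
    BddBelow (Set.range fun y => u s y + K * |x - y|) := by
  refine ⟨-M, fun z hz => ?_⟩
  obtain ⟨y, rfl⟩ := hz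
  dsimp only
  have := (abs_le.1 (hM s y)).1
  nlinarith [abs_nonneg (x - y)]

lemma infConv_le (hM : ∀ s x, |u s x| ≤ M) (hK : 0 ≤ K) (s x : ℝ) :
    infConv u K s x ≤ u s x := by
  have := ciInf_le (infConv_bddBelow hM hK s x) x
  simpa [infConv] using this

lemma le_infConv (hM : ∀ s x, |u s x| ≤ M) (hK : 0 ≤ K) (s x : ℝ) :
    -M ≤ infConv u K s x := by
  refine le_ciInf fun y => ?_
  have := (abs_le.1 (hM s y)).1
  nlinarith [abs_nonneg (x - y)]

lemma abs_infConv_le (hM : ∀ s x, |u s x| ≤ M) (hK : 0 ≤ K) (s x : ℝ) :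
    |infConv u K s x| ≤ M := by
  rw [abs_le]
  refine ⟨le_infConv hM hK s x, (infConv_le hM hK s x).trans ((abs_le.1 (hM s x)).2)⟩

lemma infConv_le_add (hM : ∀ s x, |u s x| ≤ M) (hK : 0 ≤ K) (s x x' : ℝ) :
    infConv u K s x ≤ infConv u K s x' + K * |x - x'| := by
  rw [← sub_le_iff_le_add]
  refine le_ciInf fun y => ?_
  rw [sub_le_iff_le_add]
  have h1 : infConv u K s x ≤ u s y + K * |x - y| := ciInf_le (infConv_bddBelow hM hK s x) y
  have h2 : |x - y| ≤ |x' - y| + |x - x'| := by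
    have := abs_sub_abs_le_abs_sub (x - y) (x' - y)
    calc |x - y| ≤ |x' - y| + |(x - y) - (x' - y)| := by
          have := abs_sub (x - y) (x' - y); nlinarith [abs_sub_le (x-y) (x'-y) 0]
      _ = |x' - y| + |x - x'| := by ring_nf
  nlinarith

lemma abs_infConv_sub (hM : ∀ s x, |u s x| ≤ M) (hK : 0 ≤ K) (s x x' : ℝ) :
    |infConv u K s x - infConv u K s x'| ≤ K * |x - x'| := by
  rw [abs_sub_le_iff]
  constructor
  · have := infConv_le_add hM hK s x x'; linarith
  · have := infConv_le_add hM hK s x' x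
    rw [abs_sub_comm x' x] at this; linarith

lemma infConv_mono (hM : ∀ s x, |u s x| ≤ M) {K K' : ℝ} (hK : 0 ≤ K) (hKK' : K ≤ K')
    (s x : ℝ) : infConv u K s x ≤ infConv u K' s x := by
  refine ciInf_mono (infConv_bddBelow hM hK s x) fun y => ?_
  nlinarith [abs_nonneg (x - y)]

lemma infConv_approx (hu : Continuous (fun p : ℝ × ℝ => u p.1 p.2))
    (hM : ∀ s x, |u s x| ≤ M) (s x : ℝ) {ε : ℝ} (hε : 0 < ε) :
    ∃ K₀ : ℝ, 0 ≤ K₀ ∧ ∀ K, K₀ ≤ K → u s x - ε ≤ infConv u K s x := by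
  have hM0 : 0 ≤ M := le_trans (abs_nonneg _) (hM s x)
  have hcy : Continuous fun y => u s y := hu.comp (continuous_const.prodMk continuous_id)
  obtain ⟨δ, hδ, hδ'⟩ := Metric.continuousAt_iff.1 hcy.continuousAt ε hε
  refine ⟨2 * M / δ, by positivity, fun K hK => ?_⟩
  refine le_ciInf fun y => ?_
  by_cases hy : |y - x| < δ
  · have := hδ' (show dist y x < δ by rwa [Real.dist_eq])
    rw [Real.dist_eq] at this
    have h1 := (abs_lt.1 this).1
    nlinarith [abs_nonneg (x - y), (le_trans (by positivity : (0:ℝ) ≤ 2*M/δ) hK)]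
  · push_neg at hy
    have hKy : K * |x - y| ≥ 2 * M := by
      rw [abs_sub_comm]
      calc 2 * M = (2 * M / δ) * δ := by field_simp
        _ ≤ K * |y - x| := by
            apply mul_le_mul hK hy (le_of_lt hδ)
            exact le_trans (by positivity) hK
    have h1 := (abs_le.1 (hM s y)).1
    have h2 := (abs_le.1 (hM s x)).2
    linarith

end InfConv

section P2
variable {u : ℝ → ℝ → ℝ} {M K : ℝ}


lemma infConv_restrict (hM : ∀ s x, |u s x| ≤ M) (hK : 0 < K) (s x : ℝ) :
    infConv u K s x
      = sInf ((fun y => u s y + K * |x - y|) '' Icc (x - (2*M+1)/K) (x + (2*M+1)/K)) := by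
  have hM0 : 0 ≤ M := le_trans (abs_nonneg _) (hM s x)
  set c := (2*M+1)/K with hc_def
  have hc : 0 < c := by positivity
  have hxB : x ∈ Icc (x - c) (x + c) := ⟨by linarith, by linarith⟩
  have hne : ((fun y => u s y + K * |x - y|) '' Icc (x - c) (x + c)).Nonempty :=
    ⟨_, ⟨x, hxB, rfl⟩⟩
  have hbdd : BddBelow ((fun y => u s y + K * |x - y|) '' Icc (x - c) (x + c)) :=
    (infConv_bddBelow hM hK.le s x).mono (image_subset_range _ _)
  apply le_antisymm
  · rw [infConv, iInf]
    exact csInf_le_csInf (infConv_bddBelow hM hK.le s x) hne (image_subset_range _ _)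
  · refine le_ciInf fun y => ?_
    by_cases hy : y ∈ Icc (x - c) (x + c)
    · exact csInf_le hbdd ⟨y, hy, rfl⟩
    · have h1 : sInf ((fun y => u s y + K * |x - y|) '' Icc (x - c) (x + c)) ≤ u s x := by
        have := csInf_le hbdd ⟨x, hxB, rfl⟩
        simpa using this
      have hyc : c ≤ |x - y| := by
        simp only [mem_Icc, not_and_or, not_le] at hy
        rw [abs_sub_comm]
        rcases hy with h | h
        · rw [abs_of_neg (by linarith)]; linarith
        · rw [abs_of_pos (by linarith)]; linarith
      have h2 : 2*M+1 ≤ K * |x - y| := by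
        calc 2*M+1 = K * c := by rw [hc_def]; field_simp
          _ ≤ K * |x - y| := by nlinarith
      have h3 := (abs_le.1 (hM s y)).1
      have h4 := (abs_le.1 (hM s x)).2
      linarith

lemma infConv_continuous_fst (hu : Continuous (fun p : ℝ × ℝ => u p.1 p.2))
    (hM : ∀ s x, |u s x| ≤ M) (hK : 0 < K) (x : ℝ) :
    Continuous fun s => infConv u K s x := by
  have hM0 : 0 ≤ M := le_trans (abs_nonneg _) (hM 0 x)
  rw [Metric.continuous_iff]
  intro s ε hε
  set c := (2*M+1)/K with hc_def
  have hc : 0 < c := by positivity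
  set B := Icc (x - c) (x + c) with hB_def
  have hxB : x ∈ B := ⟨by linarith, by linarith⟩
  have hcomp : IsCompact ((Icc (s-1) (s+1)) ×ˢ B) := isCompact_Icc.prod isCompact_Icc
  have huc : UniformContinuousOn (fun p : ℝ × ℝ => u p.1 p.2) ((Icc (s-1) (s+1)) ×ˢ B) :=
    hcomp.uniformContinuousOn_of_continuous hu.continuousOn
  rw [Metric.uniformContinuousOn_iff] at huc
  obtain ⟨δ, hδ, hδ'⟩ := huc (ε/2) (by positivity)
  refine ⟨min δ 1, by positivity, fun s' hs' => ?_⟩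
  rw [Real.dist_eq] at hs'
  have hs1 : |s' - s| ≤ 1 := le_of_lt (lt_of_lt_of_le hs' (min_le_right _ _))
  have hsδ : |s' - s| < δ := lt_of_lt_of_le hs' (min_le_left _ _)
  have hs'mem : s' ∈ Icc (s-1) (s+1) := by
    rw [abs_le] at hs1; constructor <;> linarith [hs1.1, hs1.2]
  have hsmem : s ∈ Icc (s-1) (s+1) := ⟨by linarith, by linarith⟩
  have key : ∀ y ∈ B, |u s' y - u s y| ≤ ε/2 := by
    intro y hy
    have := hδ' (s', y) (by exact ⟨hs'mem, hy⟩) (s, y) (by exact ⟨hsmem, hy⟩)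
      (by rw [Prod.dist_eq]; simp [Real.dist_eq, hsδ, hδ])
    rw [Real.dist_eq] at this
    exact le_of_lt this
  have hne : ∀ t : ℝ, ((fun y => u t y + K * |x - y|) '' B).Nonempty :=
    fun t => ⟨_, ⟨x, hxB, rfl⟩⟩
  have hbdd : ∀ t : ℝ, BddBelow ((fun y => u t y + K * |x - y|) '' B) :=
    fun t => (infConv_bddBelow hM hK.le t x).mono (image_subset_range _ _)
  have main : ∀ t t' : ℝ, (∀ y ∈ B, |u t' y - u t y| ≤ ε/2) →
      infConv u K t' x ≤ infConv u K t x + ε/2 := by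
    intro t t' h
    rw [infConv_restrict hM hK t' x, infConv_restrict hM hK t x]
    rw [← sub_le_iff_le_add]
    refine le_csInf (hne t) ?_
    rintro b ⟨y, hy, rfl⟩
    rw [sub_le_iff_le_add]
    calc sInf ((fun y => u t' y + K * |x - y|) '' B) ≤ u t' y + K * |x - y| :=
          csInf_le (hbdd t') ⟨y, hy, rfl⟩
      _ ≤ u t y + K * |x - y| + ε/2 := by
          have := (abs_le.1 (h y hy)).2; linarith
  have key' : ∀ y ∈ B, |u s y - u s' y| ≤ ε/2 := by
    intro y hy; rw [abs_sub_comm]; exact key y hy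
  have h1 := main s s' key
  have h2 := main s' s key'
  rw [Real.dist_eq, abs_sub_lt_iff]
  constructor <;> linarith

lemma infConv_continuous (hu : Continuous (fun p : ℝ × ℝ => u p.1 p.2))
    (hM : ∀ s x, |u s x| ≤ M) (hK : 0 < K) :
    Continuous (fun p : ℝ × ℝ => infConv u K p.1 p.2) := by
  have h := continuous_prod_of_continuous_lipschitzWith
    (fun q : ℝ × ℝ => infConv u K q.2 q.1) K.toNNReal
    (fun a => infConv_continuous_fst hu hM hK a)
    (fun b => ?_)
  · exact h.comp (continuous_swap)
  · apply LipschitzWith.of_dist_le_mul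
    intro x x'
    rw [Real.dist_eq, Real.dist_eq, Real.coe_toNNReal _ hK.le]
    exact abs_infConv_sub hM hK.le b x x'

end P2

lemma ode_comparison {f g F G : ℝ → ℝ} {K a b : ℝ} (hK : 0 ≤ K) (_hab : a ≤ b)
    (hf : ContinuousOn f (Icc a b)) (hg : ContinuousOn g (Icc a b))
    (hf' : ∀ s ∈ Ico a b, HasDerivWithinAt f (F s) (Ici s) s)
    (hg' : ∀ s ∈ Ico a b, HasDerivWithinAt g (G s) (Ici s) s)
    (hFG : ∀ s ∈ Ico a b, F s - G s ≤ K * |f s - g s|)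
    (hinit : f a ≤ g a) :
    ∀ s ∈ Icc a b, f s ≤ g s := by
  set d : ℝ → ℝ := fun s => f s - g s with hd_def
  set φ : ℝ → ℝ := fun s => max (d s) 0 with hφ_def
  have hφcont : ContinuousOn φ (Icc a b) := by
    have hc : Continuous (fun y : ℝ => max y 0) := continuous_id.max continuous_const
    exact hc.comp_continuousOn (hf.sub hg)
  have hliminf : ∀ s ∈ Ico a b, ∀ r, (fun s => K * φ s) s < r →
      ∃ᶠ z in 𝓝[>] s, (z - s)⁻¹ * (φ z - φ s) < r := by
    intro s hs r hr
    dsimp only at hr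
    have hsb : s < b := hs.2
    have hmem : ∀ᶠ z in 𝓝[>] s, z ∈ Ioc s b := by
      rw [← nhdsWithin_Ioc_eq_nhdsGT hsb]
      exact eventually_mem_nhdsWithin
    have hdc : Tendsto d (𝓝[>] s) (𝓝 (d s)) := by
      have h1 : ContinuousWithinAt d (Icc a b) s :=
        (hf.sub hg).continuousWithinAt ⟨hs.1, hs.2.le⟩
      have h2 : ContinuousWithinAt d (Ioc s b) s :=
        h1.mono (fun z hz => ⟨hs.1.trans hz.1.le, hz.2⟩)
      rwa [ContinuousWithinAt, nhdsWithin_Ioc_eq_nhdsGT hsb] at h2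
    have hd' : HasDerivWithinAt d (F s - G s) (Ici s) s := (hf' s hs).sub (hg' s hs)
    have hslope : Tendsto (slope d s) (𝓝[>] s) (𝓝 (F s - G s)) := by
      have := hasDerivWithinAt_iff_tendsto_slope.1 hd'
      rwa [Ici_sdiff_left] at this
    have hds_eq : f s - g s = d s := rfl
    rcases lt_trichotomy (d s) 0 with hds | hds | hds
    · have hev : ∀ᶠ z in 𝓝[>] s, d z < 0 := hdc.eventually_lt_const hds
      have hφs : φ s = 0 := max_eq_right hds.le
      have hr0 : (0:ℝ) < r := by
        rw [hφs, mul_zero] at hr; exact hr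
      refine ((hev.and hmem).mono fun z hz => ?_).frequently
      have hφz : φ z = 0 := max_eq_right hz.1.le
      rw [hφz, hφs, sub_zero, mul_zero]
      exact hr0
    · have hFG0 : F s - G s ≤ 0 := by
        have h1 := hFG s hs
        rw [hds_eq, hds, abs_zero, mul_zero] at h1
        exact h1
      have hφs : φ s = 0 := max_eq_right hds.le
      have hr0 : (0:ℝ) < r := by
        rw [hφs, mul_zero] at hr; exact hr
      have hev : ∀ᶠ z in 𝓝[>] s, slope d s z < r :=
        hslope.eventually_lt_const (lt_of_le_of_lt hFG0 hr0)
      refine ((hev.and hmem).mono fun z hz => ?_).frequently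
      have hzs : s < z := hz.2.1
      rw [hφs, sub_zero]
      rcases le_or_gt (d z) 0 with h | h
      · have hφz : φ z = 0 := max_eq_right h
        rw [hφz, mul_zero]; exact hr0
      · have hφz : φ z = d z := max_eq_left h.le
        have hsl := hz.1
        rw [slope_def_field, hds, sub_zero, div_eq_inv_mul] at hsl
        rw [hφz]
        exact hsl
    · have hφs : φ s = d s := max_eq_left hds.le
      have hlim : F s - G s < r := by
        have h1 := hFG s hs
        rw [hds_eq, abs_of_pos hds] at h1
        rw [hφs] at hr; linarith
      have hev1 : ∀ᶠ z in 𝓝[>] s, slope d s z < r := hslope.eventually_lt_const hlim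
      have hev2 : ∀ᶠ z in 𝓝[>] s, 0 < d z := hdc.eventually_const_lt hds
      refine ((hev1.and (hev2.and hmem)).mono fun z hz => ?_).frequently
      have hzs : s < z := hz.2.2.1
      have hφz : φ z = d z := max_eq_left hz.2.1.le
      rw [hφz, hφs]
      have hsl := hz.1
      rwa [slope_def_field, div_eq_inv_mul] at hsl
  have hφa : φ a ≤ 0 := max_le (show f a - g a ≤ 0 by linarith) le_rfl
  have hbound : ∀ s ∈ Ico a b, (fun s => K * φ s) s ≤ K * φ s + 0 := fun s _ => by simp
  have hmain := le_gronwallBound_of_liminf_deriv_right_le (f := φ)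
    (f' := fun s => K * φ s) (δ := 0) (K := K) (ε := 0) hφcont hliminf hφa hbound
  intro s hs
  have h1 := hmain s hs
  rw [gronwallBound_ε0, zero_mul] at h1
  have h2 : d s ≤ φ s := le_max_left _ _
  have h3 : f s - g s ≤ 0 := le_trans h2 h1
  linarith

set_option maxHeartbeats 2000000 in
lemma peano_exists {u : ℝ → ℝ → ℝ} {M : ℝ}
    (hu : Continuous (fun p : ℝ × ℝ => u p.1 p.2))
    (hM : ∀ s x, |u s x| ≤ M) {t : ℝ} (ht : 0 < t) (η₀ : ℝ) :
    ∃ c : ℝ → ℝ, c 0 = η₀ ∧ ∀ s ∈ Icc (0:ℝ) t, HasDerivAt c (u s (c s)) s := by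
  have hM0 : 0 ≤ M := le_trans (abs_nonneg _) (hM 0 0)
  set v : ℕ → ℝ → ℝ → ℝ := fun n s x => infConv u ((n:ℝ)+1) s x with hv_def
  have hKpos : ∀ n : ℕ, (0:ℝ) < (n:ℝ)+1 := fun n => by positivity
  -- Step 1: Picard-Lindelöf existence for each n
  have hex : ∀ n : ℕ, ∃ f : ℝ → ℝ, f 0 = η₀ ∧
      ∀ s ∈ Icc (0:ℝ) t, HasDerivWithinAt f (v n s (f s)) (Icc 0 t) s := by
    intro n
    have hK := hKpos n
    have hpl : IsPicardLindelof (fun s x => v n s x) (tmin := 0) (tmax := t)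
        ⟨0, ⟨le_rfl, ht.le⟩⟩ η₀ (⟨M*t+1, by positivity⟩ : NNReal) 0 (⟨M, hM0⟩ : NNReal)
        (⟨(n:ℝ)+1, by positivity⟩ : NNReal) := by
      refine ⟨?_, ?_, ?_, ?_⟩
      · intro s _
        apply LipschitzWith.lipschitzOnWith
        apply LipschitzWith.of_dist_le_mul
        intro x y
        rw [Real.dist_eq, Real.dist_eq]
        have h := abs_infConv_sub hM hK.le s x y
        exact h
      · exact fun x _ => (infConv_continuous_fst hu hM hK x).continuousOn
      · intro s _ x _
        rw [Real.norm_eq_abs]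
        exact abs_infConv_le hM hK.le s x
      · show M * max (t - 0) (0 - 0) ≤ (M*t+1) - 0
        have : max (t - 0) (0 - 0) = t := by
          rw [sub_zero, sub_zero, max_eq_left ht.le]
        rw [this]; nlinarith
    exact hpl.exists_eq_forall_mem_Icc_hasDerivWithinAt₀
  choose f hf0 hfderiv using hex
  -- derivative within Ici s / Ioi r
  have hmem_Ici : ∀ s ∈ Ico (0:ℝ) t, Icc (0:ℝ) t ∈ 𝓝[Ici s] s := by
    intro s hs
    rw [mem_nhdsWithin]
    exact ⟨Iio t, isOpen_Iio, hs.2, fun z hz => ⟨hs.1.trans hz.2, hz.1.le⟩⟩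
  have hmem_Ioi : ∀ r ∈ Ico (0:ℝ) t, Icc (0:ℝ) t ∈ 𝓝[Ioi r] r := by
    intro r hr
    rw [mem_nhdsWithin]
    exact ⟨Iio t, isOpen_Iio, hr.2, fun z hz => ⟨hr.1.trans hz.2.le, hz.1.le⟩⟩
  have hfderiv_Ici : ∀ n, ∀ s ∈ Ico (0:ℝ) t,
      HasDerivWithinAt (f n) (v n s (f n s)) (Ici s) s :=
    fun n s hs => (hfderiv n s ⟨hs.1, hs.2.le⟩).mono_of_mem_nhdsWithin (hmem_Ici s hs)
  have hfderiv_Ioi : ∀ n, ∀ r ∈ Ico (0:ℝ) t,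
      HasDerivWithinAt (f n) (v n r (f n r)) (Ioi r) r :=
    fun n r hr => (hfderiv n r ⟨hr.1, hr.2.le⟩).mono_of_mem_nhdsWithin (hmem_Ioi r hr)
  -- Step 2: continuity
  have hfc : ∀ n, ContinuousOn (f n) (Icc 0 t) :=
    fun n s hs => (hfderiv n s hs).continuousWithinAt
  -- Step 3: M-Lipschitz
  have hlip : ∀ n, ∀ s ∈ Icc (0:ℝ) t, ∀ s' ∈ Icc (0:ℝ) t,
      |f n s' - f n s| ≤ M * |s' - s| := by
    intro n s hs s' hs'
    have := Convex.norm_image_sub_le_of_norm_hasDerivWithin_le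
      (f := f n) (f' := fun r => v n r (f n r)) (s := Icc 0 t) (C := M)
      (fun r hr => hfderiv n r hr)
      (fun r hr => by rw [Real.norm_eq_abs]; exact abs_infConv_le hM (hKpos n).le r (f n r))
      (convex_Icc 0 t) hs hs'
    simpa [Real.norm_eq_abs] using this
  -- Step 4: uniform bound
  have hbd : ∀ n, ∀ s ∈ Icc (0:ℝ) t, |f n s - η₀| ≤ M * t := by
    intro n s hs
    have h := hlip n 0 ⟨le_rfl, ht.le⟩ s hs
    rw [hf0 n] at h
    refine h.trans ?_
    rw [sub_zero]
    have : |s| ≤ t := by rw [abs_of_nonneg hs.1]; exact hs.2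
    nlinarith
  -- Step 5: monotonicity in n
  have hmono : ∀ n m : ℕ, n ≤ m → ∀ s ∈ Icc (0:ℝ) t, f n s ≤ f m s := by
    intro n m hnm
    refine ode_comparison (K := (m:ℝ)+1) (by positivity) ht.le (hfc n) (hfc m)
      (hfderiv_Ici n) (hfderiv_Ici m) ?_ (by rw [hf0 n, hf0 m])
    intro s hs
    have h1 : v n s (f n s) ≤ v m s (f n s) :=
      infConv_mono hM (hKpos n).le (by exact_mod_cast add_le_add_left (Nat.cast_le.2 hnm) 1)
        s (f n s)
    have h2 : v m s (f n s) - v m s (f m s) ≤ ((m:ℝ)+1) * |f n s - f m s| := by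
      have := abs_infConv_sub hM (hKpos m).le s (f n s) (f m s)
      have h3 := (abs_le.1 this).2
      linarith [le_abs_self (infConv u ((m:ℝ)+1) s (f n s) - infConv u ((m:ℝ)+1) s (f m s))]
    linarith
  -- Step 6: limit function
  have hbdd_above : ∀ s ∈ Icc (0:ℝ) t, BddAbove (Set.range fun n => f n s) := by
    intro s hs
    refine ⟨η₀ + M * t, ?_⟩
    rintro z ⟨n, rfl⟩
    have := (abs_le.1 (hbd n s hs)).2
    dsimp only
    linarith
  set x : ℝ → ℝ := fun s => ⨆ n, f n s with hx_def
  have htend : ∀ s ∈ Icc (0:ℝ) t, Tendsto (fun n => f n s) atTop (𝓝 (x s)) := by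
    intro s hs
    exact tendsto_atTop_ciSup (fun n m hnm => hmono n m hnm s hs) (hbdd_above s hs)
  -- Step 7: x is Lipschitz hence continuous on Icc
  have hxlip : ∀ s ∈ Icc (0:ℝ) t, ∀ s' ∈ Icc (0:ℝ) t, |x s' - x s| ≤ M * |s' - s| := by
    intro s hs s' hs'
    have h1 : Tendsto (fun n => |f n s' - f n s|) atTop (𝓝 |x s' - x s|) :=
      ((htend s' hs').sub (htend s hs)).abs
    exact le_of_tendsto h1 (Filter.Eventually.of_forall fun n => hlip n s hs s' hs')
  have hxc : ContinuousOn x (Icc 0 t) := by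
    have : LipschitzOnWith (Real.toNNReal M) x (Icc 0 t) := by
      apply LipschitzOnWith.of_dist_le_mul
      intro a ha b hb
      rw [Real.dist_eq, Real.dist_eq, Real.coe_toNNReal _ hM0]
      exact hxlip b hb a ha
    exact this.continuousOn
  -- Step 8: integral equation for f n
  have hveq : ∀ n, Continuous (fun p : ℝ × ℝ => v n p.1 p.2) :=
    fun n => infConv_continuous hu hM (hKpos n)
  have hintc : ∀ n, ContinuousOn (fun r => v n r (f n r)) (Icc 0 t) := by
    intro n
    exact (hveq n).comp_continuousOn (continuousOn_id.prodMk (hfc n))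
  have hinteq : ∀ n, ∀ s ∈ Icc (0:ℝ) t,
      f n s - η₀ = ∫ r in (0:ℝ)..s, v n r (f n r) := by
    intro n s hs
    have h := intervalIntegral.integral_eq_sub_of_hasDeriv_right_of_le hs.1
      ((hfc n).mono (Icc_subset_Icc le_rfl hs.2))
      (fun r hr => hfderiv_Ioi n r ⟨hr.1.le, lt_of_lt_of_le hr.2 hs.2⟩)
      (by
        have h2 : ContinuousOn (fun r => v n r (f n r)) (uIcc 0 s) := by
          rw [uIcc_of_le hs.1]; exact (hintc n).mono (Icc_subset_Icc le_rfl hs.2)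
        exact h2.intervalIntegrable)
    rw [h, hf0 n]
  -- Step 9: pointwise convergence of integrands
  have hptwise : ∀ r ∈ Icc (0:ℝ) t,
      Tendsto (fun n => v n r (f n r)) atTop (𝓝 (u r (x r))) := by
    intro r hr
    rw [Metric.tendsto_atTop]
    intro ε hε
    obtain ⟨K₀, hK₀0, hK₀⟩ := infConv_approx hu hM r (x r) (show (0:ℝ) < ε/4 by linarith)
    obtain ⟨j, hj⟩ := exists_nat_ge K₀
    have hucy : Continuous fun y => u r y := hu.comp (continuous_const.prodMk continuous_id)
    obtain ⟨δ₁, hδ₁, hδ₁'⟩ := Metric.continuousAt_iff.1 hucy.continuousAt (ε/4) (by linarith)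
    have htendr := htend r hr
    rw [Metric.tendsto_atTop] at htendr
    obtain ⟨N₁, hN₁⟩ := htendr (min δ₁ (ε/(4*((j:ℝ)+1)))) (by positivity)
    refine ⟨max N₁ j, fun n hn => ?_⟩
    have hnN₁ : N₁ ≤ n := le_trans (le_max_left _ _) hn
    have hnj : j ≤ n := le_trans (le_max_right _ _) hn
    have hdist := hN₁ n hnN₁
    rw [Real.dist_eq] at hdist
    have hd1 : |f n r - x r| < δ₁ := lt_of_lt_of_le hdist (min_le_left _ _)
    have hd2 : |f n r - x r| < ε/(4*((j:ℝ)+1)) := lt_of_lt_of_le hdist (min_le_right _ _)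
    -- upper bound
    have hup : v n r (f n r) ≤ u r (x r) + ε/4 := by
      have h1 : v n r (f n r) ≤ u r (f n r) := infConv_le hM (hKpos n).le r (f n r)
      have h2 : |u r (f n r) - u r (x r)| < ε/4 := by
        have := hδ₁' (show dist (f n r) (x r) < δ₁ by rwa [Real.dist_eq])
        rwa [Real.dist_eq] at this
      have := (abs_lt.1 h2).2
      linarith
    -- lower bound
    have hlow : u r (x r) - ε/2 ≤ v n r (f n r) := by
      have h1 : v j r (f n r) ≤ v n r (f n r) :=
        infConv_mono hM (hKpos j).le (by exact_mod_cast add_le_add_left (Nat.cast_le.2 hnj) 1)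
          r (f n r)
      have h2 : v j r (x r) - ((j:ℝ)+1) * |f n r - x r| ≤ v j r (f n r) := by
        have := abs_infConv_sub hM (hKpos j).le r (f n r) (x r)
        have h3 := (abs_le.1 this).1
        have h4 : |f n r - x r| = |x r - f n r| := abs_sub_comm _ _
        linarith [neg_abs_le (infConv u ((j:ℝ)+1) r (f n r) - infConv u ((j:ℝ)+1) r (x r))]
      have h5 : u r (x r) - ε/4 ≤ v j r (x r) := hK₀ ((j:ℝ)+1) (by linarith)
      have h6 : ((j:ℝ)+1) * |f n r - x r| ≤ ε/4 := by
        have hj1 : (0:ℝ) < (j:ℝ)+1 := hKpos j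
        have := mul_le_mul_of_nonneg_left hd2.le hj1.le
        calc ((j:ℝ)+1) * |f n r - x r| ≤ ((j:ℝ)+1) * (ε/(4*((j:ℝ)+1))) := this
          _ = ε/4 := by field_simp
      linarith
    rw [Real.dist_eq, abs_lt]
    constructor <;> linarith
  -- Step 10 & 11: integral equation for x
  have hxeq : ∀ s ∈ Icc (0:ℝ) t, x s = η₀ + ∫ r in (0:ℝ)..s, u r (x r) := by
    intro s hs
    have hconv : Tendsto (fun n => ∫ r in (0:ℝ)..s, v n r (f n r)) atTop
        (𝓝 (∫ r in (0:ℝ)..s, u r (x r))) := by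
      have hrw : ∀ h : ℝ → ℝ, ∫ r in (0:ℝ)..s, h r = ∫ r in Ioc (0:ℝ) s, h r :=
        fun h => intervalIntegral.integral_of_le hs.1
      rw [hrw]
      have := MeasureTheory.tendsto_integral_of_dominated_convergence
        (μ := volume.restrict (Ioc (0:ℝ) s))
        (F := fun n r => v n r (f n r)) (f := fun r => u r (x r)) (fun _ => M)
        (fun n => (((hintc n).mono (fun r hr => ⟨hr.1.le, hr.2.trans hs.2⟩)).aestronglyMeasurable
          measurableSet_Ioc))
        (integrable_const M)
        (fun n => Filter.Eventually.of_forall fun r => by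
          rw [Real.norm_eq_abs]; exact abs_infConv_le hM (hKpos n).le r (f n r))
        ((ae_restrict_iff' measurableSet_Ioc).2 (Filter.Eventually.of_forall
          fun r hr => hptwise r ⟨hr.1.le, hr.2.trans hs.2⟩))
      convert this using 2
      exact (hrw _).symm ▸ rfl
    have h1 : Tendsto (fun n => f n s - η₀) atTop (𝓝 (x s - η₀)) := (htend s hs).sub_const η₀
    have h2 : Tendsto (fun n => f n s - η₀) atTop (𝓝 (∫ r in (0:ℝ)..s, u r (x r))) := by
      rw [show (fun n => f n s - η₀) = fun n => ∫ r in (0:ℝ)..s, v n r (f n r) from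
        funext fun n => hinteq n s hs]
      exact hconv
    have := tendsto_nhds_unique h1 h2
    linarith
  -- Step 12: final solution via FTC
  set proj : ℝ → ℝ := fun r => max 0 (min r t) with hproj_def
  have hprojc : Continuous proj := continuous_const.max (continuous_id.min continuous_const)
  have hprojmem : ∀ r, proj r ∈ Icc (0:ℝ) t := by
    intro r
    constructor
    · exact le_max_left _ _
    · rw [max_le_iff]; exact ⟨ht.le, min_le_right _ _⟩
  have hprojid : ∀ r ∈ Icc (0:ℝ) t, proj r = r := by
    intro r hr
    rw [hproj_def]
    dsimp only
    rw [min_eq_left hr.2, max_eq_right hr.1]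
  set g : ℝ → ℝ := fun r => u r (x (proj r)) with hg_def
  have hgc : Continuous g := by
    have hxproj : Continuous fun r => x (proj r) :=
      hxc.comp_continuous hprojc hprojmem
    exact hu.comp (continuous_id.prodMk hxproj)
  set c : ℝ → ℝ := fun s => η₀ + ∫ r in (0:ℝ)..s, g r with hc_def
  have hcderiv : ∀ s : ℝ, HasDerivAt c (g s) s := by
    intro s
    have := intervalIntegral.integral_hasDerivAt_right (f := g)
      (hgc.intervalIntegrable 0 s)
      (hgc.aestronglyMeasurable.stronglyMeasurableAtFilter)
      hgc.continuousAt
    exact this.const_add η₀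
  have hcx : ∀ s ∈ Icc (0:ℝ) t, c s = x s := by
    intro s hs
    rw [hc_def]
    dsimp only
    rw [show (∫ r in (0:ℝ)..s, g r) = ∫ r in (0:ℝ)..s, u r (x r) from
      intervalIntegral.integral_congr fun r hr => by
        rw [uIcc_of_le hs.1] at hr
        rw [hg_def]
        dsimp only
        rw [hprojid r ⟨hr.1, hr.2.trans hs.2⟩]]
    exact (hxeq s hs).symm
  refine ⟨c, ?_, ?_⟩
  · have h0 : (0:ℝ) ∈ Icc (0:ℝ) t := ⟨le_rfl, ht.le⟩
    rw [hcx 0 h0]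
    have : Tendsto (fun n => f n 0) atTop (𝓝 η₀) := by
      rw [show (fun n => f n 0) = fun _ => η₀ from funext fun n => hf0 n]
      exact tendsto_const_nhds
    exact tendsto_nhds_unique (htend 0 h0) this
  · intro s hs
    have h1 := hcderiv s
    have h2 : g s = u s (c s) := by
      rw [hg_def]; dsimp only
      rw [hprojid s hs, ← hcx s hs]
    rwa [h2] at h1


/-- If all difference quotients of a continuous bounded velocity field `u`
along pairs of characteristics started at `ζ₀` and at nearby points
`η₀ ∈ (ζ₀ − 1/N, ζ₀) ∪ (ζ₀, ζ₀ + 1/N)` are bounded by `N` in absolute value on `[0,t]`,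
then the characteristic emanating from `ζ₀` is unique on `[0,t]`. -/
theorem uniqueness_of_characteristic_from_bounded_quotients
    (t N : ℝ) (ht : 0 < t) (hN : 0 < N)
    (u : ℝ → ℝ → ℝ) (hu_cont : Continuous (fun p : ℝ × ℝ => u p.1 p.2))
    (hu_bdd : ∃ M : ℝ, ∀ s x : ℝ, |u s x| ≤ M)
    (ζ₀ : ℝ)
    (hω : ∀ η₀ : ℝ, η₀ ≠ ζ₀ → |η₀ - ζ₀| < 1 / N →
      ∀ cη cζ : ℝ → ℝ, cη 0 = η₀ → cζ 0 = ζ₀ →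
        (∀ s ∈ Icc (0:ℝ) t, HasDerivAt cη (u s (cη s)) s) →
        (∀ s ∈ Icc (0:ℝ) t, HasDerivAt cζ (u s (cζ s)) s) →
        ∀ s ∈ Icc (0:ℝ) t, cη s ≠ cζ s →
          -N ≤ (u s (cη s) - u s (cζ s)) / (cη s - cζ s) ∧
          (u s (cη s) - u s (cζ s)) / (cη s - cζ s) ≤ N) :
    ∀ c₁ c₂ : ℝ → ℝ, c₁ 0 = ζ₀ → c₂ 0 = ζ₀ →
      (∀ s ∈ Icc (0:ℝ) t, HasDerivAt c₁ (u s (c₁ s)) s) →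
      (∀ s ∈ Icc (0:ℝ) t, HasDerivAt c₂ (u s (c₂ s)) s) →
      EqOn c₁ c₂ (Icc 0 t) := by
  obtain ⟨M, hM⟩ := hu_bdd
  intro c₁ c₂ h10 h20 h1d h2d
  intro s₁ hs₁
  have key : ∀ ε : ℝ, 0 < ε → ε < 1/N →
      |c₁ s₁ - c₂ s₁| ≤ 2 * (ε * Real.exp (N * t)) := by
    intro ε hε hεN
    obtain ⟨cη, hη0, hηd⟩ := peano_exists hu_cont hM ht (ζ₀ + ε)
    have hηne : ζ₀ + ε ≠ ζ₀ := by intro h; linarith [congrArg id h]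
    have habs : |ζ₀ + ε - ζ₀| < 1/N := by
      rw [add_sub_cancel_left, abs_of_pos hε]; exact hεN
    have grb : ∀ c : ℝ → ℝ, c 0 = ζ₀ →
        (∀ s ∈ Icc (0:ℝ) t, HasDerivAt c (u s (c s)) s) →
        ∀ s ∈ Icc (0:ℝ) t, |cη s - c s| ≤ ε * Real.exp (N * s) := by
      intro c hc0 hcd
      have hcont : ContinuousOn (fun s => cη s - c s) (Icc 0 t) :=
        fun s hs => ((hηd s hs).sub (hcd s hs)).continuousAt.continuousWithinAt
      have hder : ∀ s ∈ Ico (0:ℝ) t, HasDerivWithinAt (fun s => cη s - c s)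
          ((fun s => u s (cη s) - u s (c s)) s) (Ici s) s := by
        intro s hs
        exact (((hηd s ⟨hs.1, hs.2.le⟩).sub (hcd s ⟨hs.1, hs.2.le⟩))).hasDerivWithinAt
      have hinit : ‖cη 0 - c 0‖ ≤ ε := by
        rw [hη0, hc0, Real.norm_eq_abs, add_sub_cancel_left, abs_of_pos hε]
      have hbound : ∀ s ∈ Ico (0:ℝ) t,
          ‖(fun s => u s (cη s) - u s (c s)) s‖ ≤ N * ‖cη s - c s‖ + 0 := by
        intro s hs
        rw [add_zero, Real.norm_eq_abs, Real.norm_eq_abs]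
        dsimp only
        by_cases heq : cη s = c s
        · rw [heq, sub_self, abs_zero]
          positivity
        · have hq := hω (ζ₀ + ε) hηne habs cη c hη0 hc0 hηd hcd s ⟨hs.1, hs.2.le⟩ heq
          have hsub : cη s - c s ≠ 0 := sub_ne_zero.2 heq
          have heqm : u s (cη s) - u s (c s)
              = ((u s (cη s) - u s (c s)) / (cη s - c s)) * (cη s - c s) := by
            field_simp
          rw [heqm, abs_mul]
          have hqabs : |(u s (cη s) - u s (c s)) / (cη s - c s)| ≤ N := abs_le.2 hq
          exact mul_le_mul_of_nonneg_right hqabs (abs_nonneg _) |>.trans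
            (le_of_eq rfl)
      intro s hs
      have hg := norm_le_gronwallBound_of_norm_deriv_right_le (f := fun s => cη s - c s)
        (f' := fun s => u s (cη s) - u s (c s)) (δ := ε) (K := N) (ε := 0) (a := 0) (b := t)
        hcont hder hinit hbound s hs
      rwa [gronwallBound_ε0, sub_zero, Real.norm_eq_abs] at hg
    have g1 := grb c₁ h10 h1d s₁ hs₁
    have g2 := grb c₂ h20 h2d s₁ hs₁
    have hexp : Real.exp (N * s₁) ≤ Real.exp (N * t) :=
      Real.exp_le_exp.2 (mul_le_mul_of_nonneg_left hs₁.2 hN.le)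
    have hεexp : ε * Real.exp (N * s₁) ≤ ε * Real.exp (N * t) :=
      mul_le_mul_of_nonneg_left hexp hε.le
    have htri : |c₁ s₁ - c₂ s₁| ≤ |cη s₁ - c₁ s₁| + |cη s₁ - c₂ s₁| := by
      have : c₁ s₁ - c₂ s₁ = (cη s₁ - c₂ s₁) - (cη s₁ - c₁ s₁) := by ring
      rw [this]
      exact (abs_sub _ _).trans (by rw [abs_sub_comm]; exact le_of_eq (add_comm _ _))
    linarith
  have hfinal : c₁ s₁ = c₂ s₁ := by
    by_contra hne
    have hpos : 0 < |c₁ s₁ - c₂ s₁| := abs_pos.2 (sub_ne_zero.2 hne)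
    set E := Real.exp (N * t) with hE_def
    have hE : 0 < E := Real.exp_pos _
    set ε := min (|c₁ s₁ - c₂ s₁| / (8 * E)) (1/(2*N)) with hε_def
    have hε : 0 < ε := lt_min (by positivity) (by positivity)
    have hεN : ε < 1/N := by
      have h1 : ε ≤ 1/(2*N) := min_le_right _ _
      have h2 : 1/(2*N) < 1/N := by
        rw [div_lt_div_iff₀ (by positivity) hN]; nlinarith
      linarith
    have h := key ε hε hεN
    have h2 : 2 * (ε * E) ≤ 2 * ((|c₁ s₁ - c₂ s₁| / (8 * E)) * E) := by
      have := min_le_left (|c₁ s₁ - c₂ s₁| / (8 * E)) (1/(2*N))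
      nlinarith
    have h3 : 2 * ((|c₁ s₁ - c₂ s₁| / (8 * E)) * E) = |c₁ s₁ - c₂ s₁| / 4 := by
      field_simp; ring
    rw [h3] at h2
    linarith
  exact hfinal
end

section
/- Let T > 0, V₁ > 0, and let U, P̄ ≥ 0. Let v, f, g : [0,T] → ℝ with f, g continuous, |f(t)| ≤ U and |g(t)| ≤ P̄ for all t, and v differentiable with v'(t) = f(t) − (1/2) v(t)² − g(t) on [0,T]. Assume that either v(t) ≥ V₁ for all t ∈ [0,T] or v(t) ≤ −V₁ for all t ∈ [0,T], and set M(t) := exp(∫₀ᵗ v(s) ds). Then for every t ∈ [0,T]: e^{−(2t/V₁)(U+P̄)} ≤ v(t)² M(t) / v(0)² ≤ e^{(2t/V₁)(U+P̄)}. -/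
open Set

/-- Abstract form of the estimate on `v² M_t'`: if
`v' = f − v²/2 − g` with `|f| ≤ U`, `|g| ≤ Pb`, and `v` stays in `[V₁,∞)` or in
`(−∞,−V₁]` on `[0,T]`, then with `M(t) = exp(∫₀ᵗ v)` one has
`e^{−(2t/V₁)(U+Pb)} ≤ v(t)² M(t)/v(0)² ≤ e^{(2t/V₁)(U+Pb)}`. -/
theorem derivative_flow_product_estimate
    (T V₁ U Pb : ℝ) (hT : 0 < T) (hV₁ : 0 < V₁) (hU : 0 ≤ U) (hPb : 0 ≤ Pb)
    (v f g : ℝ → ℝ)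
    (hf_cont : ContinuousOn f (Icc 0 T)) (hg_cont : ContinuousOn g (Icc 0 T))
    (hf_bdd : ∀ t ∈ Icc (0:ℝ) T, |f t| ≤ U)
    (hg_bdd : ∀ t ∈ Icc (0:ℝ) T, |g t| ≤ Pb)
    (hv : ∀ t ∈ Icc (0:ℝ) T, HasDerivAt v (f t - (1 / 2) * (v t) ^ 2 - g t) t)
    (hsign : (∀ t ∈ Icc (0:ℝ) T, V₁ ≤ v t) ∨ (∀ t ∈ Icc (0:ℝ) T, v t ≤ -V₁)) :
    ∀ t ∈ Icc (0:ℝ) T,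
      Real.exp (-(2 * t / V₁) * (U + Pb)) ≤
        (v t) ^ 2 * Real.exp (∫ s in (0:ℝ)..t, v s) / (v 0) ^ 2 ∧
      (v t) ^ 2 * Real.exp (∫ s in (0:ℝ)..t, v s) / (v 0) ^ 2 ≤
        Real.exp ((2 * t / V₁) * (U + Pb)) := by
  -- |v| ≥ V₁ on [0,T], in particular v ≠ 0
  have habs : ∀ t ∈ Icc (0:ℝ) T, V₁ ≤ |v t| := by
    intro t ht
    rcases hsign with h | h
    · exact le_trans (h t ht) (le_abs_self _)
    · calc V₁ ≤ -(v t) := by linarith [h t ht]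
        _ ≤ |v t| := neg_le_abs _
  have hne : ∀ t ∈ Icc (0:ℝ) T, v t ≠ 0 := by
    intro t ht h0
    have := habs t ht
    rw [h0, abs_zero] at this; linarith
  have hvc : ContinuousOn v (Icc 0 T) := fun t ht =>
    (hv t ht).continuousAt.continuousWithinAt
  -- F(t) = log((v t)^2) + ∫₀ᵗ v
  set F : ℝ → ℝ := fun t => Real.log ((v t) ^ 2) + ∫ s in (0:ℝ)..t, v s with hF
  set C : ℝ := 2 / V₁ * (U + Pb) with hC
  have hFderiv : ∀ t ∈ Icc (0:ℝ) T,
      HasDerivWithinAt F (2 * (f t - g t) / v t) (Icc 0 T) t := by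
    intro t ht
    have h1 : HasDerivAt (fun s => Real.log ((v s) ^ 2))
        (2 * (f t - (1 / 2) * (v t) ^ 2 - g t) * (v t) / ((v t) ^ 2)) t := by
      have := (((hv t ht).pow 2).log (pow_ne_zero 2 (hne t ht)))
      convert this using 1
      · rfl
      · simp only [Pi.pow_apply]; push_cast; ring
    have hInt : IntervalIntegrable v MeasureTheory.volume 0 t := by
      apply ContinuousOn.intervalIntegrable
      apply hvc.mono
      rw [uIcc_of_le ht.1]
      exact Icc_subset_Icc le_rfl ht.2
    haveI : Fact (t ∈ Icc (0:ℝ) T) := ⟨ht⟩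
    have h2 : HasDerivWithinAt (fun u => ∫ s in (0:ℝ)..u, v s) (v t) (Icc 0 T) t :=
      intervalIntegral.integral_hasDerivWithinAt_right hInt
        (hvc.stronglyMeasurableAtFilter_nhdsWithin measurableSet_Icc t)
        (hvc t ht)
    have := (h1.hasDerivWithinAt.add h2)
    refine this.congr_deriv ?_
    have hv0 : v t ≠ 0 := hne t ht
    rw [div_add' _ _ _ (pow_ne_zero 2 hv0), div_eq_div_iff (pow_ne_zero 2 hv0) hv0]
    ring
  have hFbound : ∀ t ∈ Icc (0:ℝ) T, ‖2 * (f t - g t) / v t‖ ≤ C := by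
    intro t ht
    have h1 : |f t - g t| ≤ U + Pb :=
      (abs_sub _ _).trans (add_le_add (hf_bdd t ht) (hg_bdd t ht))
    have h2 : V₁ ≤ |v t| := habs t ht
    rw [Real.norm_eq_abs, abs_div, abs_mul, abs_two]
    rw [div_le_iff₀ (lt_of_lt_of_le hV₁ h2)]
    calc 2 * |f t - g t| ≤ 2 * (U + Pb) := by linarith
      _ = (2 / V₁ * (U + Pb)) * V₁ := by field_simp
      _ ≤ C * |v t| := by
          apply mul_le_mul_of_nonneg_left h2
          positivity
  clear_value C
  intro t ht
  have h0mem : (0:ℝ) ∈ Icc (0:ℝ) T := ⟨le_rfl, hT.le⟩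
  have hMVT : ‖F t - F 0‖ ≤ C * ‖t - 0‖ :=
    (convex_Icc 0 T).norm_image_sub_le_of_norm_hasDerivWithin_le
      hFderiv hFbound h0mem ht
  rw [Real.norm_eq_abs, Real.norm_eq_abs, sub_zero, abs_of_nonneg ht.1] at hMVT
  rw [abs_le] at hMVT
  have hF0 : F 0 = Real.log ((v 0) ^ 2) := by
    simp [hF]
  have hv0ne : v 0 ≠ 0 := hne 0 h0mem
  have hvtne : v t ≠ 0 := hne t ht
  have hpos0 : (0:ℝ) < (v 0) ^ 2 := by positivity
  have hpost : (0:ℝ) < (v t) ^ 2 := by positivity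
  have hkey : (v t) ^ 2 * Real.exp (∫ s in (0:ℝ)..t, v s) / (v 0) ^ 2
      = Real.exp (F t - F 0) := by
    rw [Real.exp_sub, hF0, Real.exp_log hpos0]
    simp only [hF]
    rw [Real.exp_add, Real.exp_log hpost]
  rw [hkey]
  constructor
  · apply Real.exp_le_exp.mpr
    have := hMVT.1
    have hCt : -(2 * t / V₁) * (U + Pb) = -(C * t) := by rw [hC]; ring
    rw [hCt]; exact this
  · apply Real.exp_le_exp.mpr
    have := hMVT.2
    have hCt : 2 * t / V₁ * (U + Pb) = C * t := by rw [hC]; ring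
    rw [hCt]; exact this
end

section
/- Let f : [0,∞) → (−∞,0] be continuous, nonincreasing, with f(0) = 0, and let g : [0,∞) → ℝ be bounded and satisfy g(t₂) − g(t₁) ≥ f(t₂ − t₁) for all 0 ≤ t₁ < t₂. Then the limit lim_{t→0⁺} g(t) exists. If, in addition, f is Lipschitz continuous, then g has locally bounded variation on [0,∞). -/
open Filter Set

/-- Let `f : [0,∞) → (−∞,0]` be continuous, nonincreasing, with
`f(0) = 0`, and let `g : [0,∞) → ℝ` be bounded with `g(t₂) − g(t₁) ≥ f(t₂ − t₁)` for
`0 ≤ t₁ < t₂`. Then `lim_{t→0⁺} g(t)` exists; if moreover `f` is Lipschitz, then `g` has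
locally bounded variation on `[0,∞)`. -/
theorem oneSided_lower_bound_gives_limit_and_BV
    (f g : ℝ → ℝ)
    (hf_cont : ContinuousOn f (Ici 0))
    (hf_anti : AntitoneOn f (Ici 0))
    (hf_nonpos : ∀ t : ℝ, 0 ≤ t → f t ≤ 0)
    (hf0 : f 0 = 0)
    (hg_bdd : ∃ M : ℝ, ∀ t : ℝ, 0 ≤ t → |g t| ≤ M)
    (hineq : ∀ t₁ t₂ : ℝ, 0 ≤ t₁ → t₁ < t₂ → g t₂ - g t₁ ≥ f (t₂ - t₁)) :
    (∃ l : ℝ, Tendsto g (nhdsWithin 0 (Ioi 0)) (nhds l)) ∧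
    (∀ K : NNReal, LipschitzOnWith K f (Ici 0) →
      ∀ b : ℝ, 0 < b → BoundedVariationOn g (Icc 0 b)) := by
  constructor
  · -- Part 1: the one-sided limit exists
    obtain ⟨M, hM⟩ := hg_bdd
    have hmem : ∀ᶠ t in nhdsWithin (0:ℝ) (Ioi 0), 0 < t :=
      eventually_mem_nhdsWithin
    have hub : ∀ᶠ t in nhdsWithin (0:ℝ) (Ioi 0), g t ≤ M :=
      hmem.mono fun t ht => (abs_le.1 (hM t ht.le)).2
    have hlb : ∀ᶠ t in nhdsWithin (0:ℝ) (Ioi 0), -M ≤ g t :=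
      hmem.mono fun t ht => (abs_le.1 (hM t ht.le)).1
    have hbdd_above : IsBoundedUnder (· ≤ ·) (nhdsWithin (0:ℝ) (Ioi 0)) g := ⟨M, hub⟩
    have hbdd_below : IsBoundedUnder (· ≥ ·) (nhdsWithin (0:ℝ) (Ioi 0)) g := ⟨-M, hlb⟩
    have hcob : IsCoboundedUnder (· ≤ ·) (nhdsWithin (0:ℝ) (Ioi 0)) g :=
      hbdd_below.isCoboundedUnder_le
    set L := limsup g (nhdsWithin (0:ℝ) (Ioi 0)) with hL
    set l := liminf g (nhdsWithin (0:ℝ) (Ioi 0)) with hl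
    -- key pointwise bound: for every t₂ > 0, L ≤ g t₂ - f t₂
    have key : ∀ t₂ : ℝ, 0 < t₂ → L ≤ g t₂ - f t₂ := by
      intro t₂ ht₂
      apply limsup_le_of_le hcob
      have hIoo : Ioo (0:ℝ) t₂ ∈ nhdsWithin (0:ℝ) (Ioi 0) :=
        Ioo_mem_nhdsGT_of_mem ⟨le_refl 0, ht₂⟩
      filter_upwards [hIoo] with t₁ ht₁
      have h1 := hineq t₁ t₂ ht₁.1.le ht₁.2
      have h2 : f t₂ ≤ f (t₂ - t₁) :=
        hf_anti (show t₂ - t₁ ∈ Ici (0:ℝ) from (sub_pos.2 ht₁.2).le)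
          (show t₂ ∈ Ici (0:ℝ) from ht₂.le) (sub_le_self _ ht₁.1.le)
      linarith
    have hf0' : Tendsto f (nhdsWithin (0:ℝ) (Ioi 0)) (nhds 0) := by
      have h := (hf_cont 0 (self_mem_Ici)).tendsto
      rw [hf0] at h
      exact h.mono_left (nhdsWithin_mono 0 Ioi_subset_Ici_self)
    have main : L ≤ l := by
      refine le_of_forall_pos_le_add ?_
      intro ε hε
      have h1 : ∀ᶠ t in nhdsWithin (0:ℝ) (Ioi 0), -(ε/2) < f t :=
        hf0'.eventually (eventually_gt_nhds (by linarith))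
      have h2 : ∃ᶠ t in nhdsWithin (0:ℝ) (Ioi 0), g t < l + ε/2 :=
        frequently_lt_of_liminf_lt hbdd_above.isCoboundedUnder_ge (by linarith)
      obtain ⟨t₂, hgt, hft, htpos⟩ := (h2.and_eventually (h1.and hmem)).exists
      have := key t₂ htpos
      linarith
    have heq : l = L :=
      le_antisymm (liminf_le_limsup hbdd_above hbdd_below) main
    exact ⟨L, tendsto_of_liminf_eq_limsup heq rfl hbdd_above hbdd_below⟩
  · -- Part 2: bounded variation
    intro K hK b hb
    set h : ℝ → ℝ := fun t => g t + K * t with hh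
    have hfK : ∀ s : ℝ, 0 ≤ s → -(K * s) ≤ f s := by
      intro s hs
      have := (lipschitzOnWith_iff_dist_le_mul.1 hK) s hs 0 self_mem_Ici
      rw [hf0, Real.dist_eq, Real.dist_eq, sub_zero, sub_zero, abs_of_nonneg hs] at this
      have := (abs_le.1 this).1
      linarith
    have hmono : MonotoneOn h (Icc 0 b) := by
      intro x hx y hy hxy
      rcases eq_or_lt_of_le hxy with rfl | hlt
      · exact le_rfl
      · have h1 := hineq x y hx.1 hlt
        have h2 := hfK (y - x) (by linarith)
        simp only [hh]
        nlinarith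
    have hgd : ∀ x y : ℝ, x ∈ Icc 0 b → y ∈ Icc 0 b → x ≤ y →
        |g y - g x| ≤ (h y - h x) + K * (y - x) := by
      intro x y hx hy hxy
      have hK0 : (0:ℝ) ≤ K * (y - x) := mul_nonneg K.2 (by linarith)
      have hhxy : h x ≤ h y := hmono hx hy hxy
      rcases eq_or_lt_of_le hxy with rfl | hlt
      · simp
      · have h1 := hineq x y hx.1 hlt
        have h2 := hfK (y - x) (by linarith)
        have a1 : g y - g x ≤ (h y - h x) + K * (y - x) := by
          simp only [hh]; nlinarith
        have a2 : -(g y - g x) ≤ (h y - h x) + K * (y - x) := by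
          nlinarith
        exact abs_le.2 ⟨by linarith, a1⟩
    have key : eVariationOn g (Icc 0 b) ≤ ENNReal.ofReal ((h b - h 0) + K * b) := by
      apply iSup_le
      rintro ⟨n, u, hu, us⟩
      have hterm : ∀ i : ℕ, i ∈ Finset.range n →
          edist (g (u (i + 1))) (g (u i)) ≤
            ENNReal.ofReal ((h (u (i+1)) - h (u i)) + K * (u (i+1) - u i)) := by
        intro i _
        rw [edist_dist, Real.dist_eq]
        exact ENNReal.ofReal_le_ofReal
          (hgd (u i) (u (i+1)) (us i) (us (i+1)) (hu (Nat.le_succ i)))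
      calc (∑ i ∈ Finset.range n, edist (g (u (i + 1))) (g (u i)))
          ≤ ∑ i ∈ Finset.range n,
              ENNReal.ofReal ((h (u (i+1)) - h (u i)) + K * (u (i+1) - u i)) :=
            Finset.sum_le_sum hterm
        _ = ENNReal.ofReal (∑ i ∈ Finset.range n,
              ((h (u (i+1)) - h (u i)) + K * (u (i+1) - u i))) := by
            rw [ENNReal.ofReal_sum_of_nonneg]
            intro i _
            have hhxy : h (u i) ≤ h (u (i+1)) :=
              hmono (us i) (us (i+1)) (hu (Nat.le_succ i))
            have : (0:ℝ) ≤ K * (u (i+1) - u i) :=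
              mul_nonneg K.2 (sub_nonneg.2 (hu (Nat.le_succ i)))
            linarith
        _ = ENNReal.ofReal ((h (u n) - h (u 0)) + K * (u n - u 0)) := by
            rw [Finset.sum_add_distrib, Finset.sum_range_sub (fun i => h (u i)),
              ← Finset.mul_sum, Finset.sum_range_sub (fun i => u i)]
        _ ≤ ENNReal.ofReal ((h b - h 0) + K * b) := by
            apply ENNReal.ofReal_le_ofReal
            have h1 : h (u n) ≤ h b :=
              hmono (us n) (right_mem_Icc.2 hb.le) (us n).2
            have h2 : h 0 ≤ h (u 0) :=
              hmono (left_mem_Icc.2 hb.le) (us 0) (us 0).1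
            have h3 : u n - u 0 ≤ b := by
              have := (us n).2; have := (us 0).1; linarith
            have : K * (u n - u 0) ≤ K * b :=
              mul_le_mul_of_nonneg_left h3 K.2
            linarith
    exact (key.trans_lt ENNReal.ofReal_lt_top).ne
end

section
/- Let T > 0, 0 ≤ σ ≤ τ < T, and 0 < c ≤ C < ∞. Let S ⊆ ℝ be a measurable set, ε₀ > 0, and let M : [0,τ] × ℝ → ℝ, (t,ζ) ↦ M_t(ζ), be jointly measurable with M_t : ℝ → ℝ nondecreasing for each t, such that for every ζ ∈ S, every ε ∈ (0,ε₀), and every t ∈ [0,τ]: M_t is differentiable at ζ with M_t'(ζ) ≥ c, and c·ε ≤ M_t(ζ+ε) − M_t(ζ) ≤ C·ε. Let f : [0,T] × ℝ → ℝ be measurable with sup_{t∈[0,T]} ∫_ℝ |f(t,y)| dy < ∞. Then lim_{ε→0⁺} ∫_S ∫_σ^τ ( 1/(M_t(ζ+ε) − M_t(ζ)) ) ∫₀^{M_t(ζ+ε) − M_t(ζ)} | f(t, M_t(ζ) + y) − f(t, M_t(ζ)) | dy dt dζ = 0. In particular, there exists a sequence ε_k → 0⁺ such that for almost every ζ ∈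 S, lim_{k→∞} ∫_σ^τ ( 1/(M_t(ζ+ε_k) − M_t(ζ)) ) ∫₀^{M_t(ζ+ε_k) − M_t(ζ)} | f(t, M_t(ζ) + y) − f(t, M_t(ζ)) | dy dt = 0. -/
open MeasureTheory Filter Set
open scoped ENNReal

/-- The inner averaged-oscillation functional appearing in the statement. -/
noncomputable def Favg (σ τ : ℝ) (M : ℝ → ℝ → ℝ) (f : ℝ → ℝ → ℝ) (ε ζ : ℝ) : ℝ :=
  ∫ t in σ..τ, (1 / (M t (ζ + ε) - M t ζ)) *
    ∫ y in (0:ℝ)..(M t (ζ + ε) - M t ζ), |f t (M t ζ + y) - f t (M t ζ)|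

lemma ofReal_integral_le_lintegral_ofReal' {α : Type*} [MeasurableSpace α] (μ : Measure α)
    (g : α → ℝ) :
    ENNReal.ofReal (∫ x, g x ∂μ) ≤ ∫⁻ x, ENNReal.ofReal (g x) ∂μ := by
  by_cases hg : Integrable g μ
  · have h1 : ∫ x, g x ∂μ ≤ ∫ x, max (g x) 0 ∂μ :=
      integral_mono hg hg.pos_part (fun x => le_max_left _ _)
    have h2 : ENNReal.ofReal (∫ x, max (g x) 0 ∂μ) = ∫⁻ x, ENNReal.ofReal (max (g x) 0) ∂μ :=
      ofReal_integral_eq_lintegral_ofReal hg.pos_part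
        (Filter.Eventually.of_forall fun x => le_max_right _ _)
    have h3 : ∀ x, ENNReal.ofReal (max (g x) 0) = ENNReal.ofReal (g x) := by
      intro x
      rcases le_total (g x) 0 with h | h
      · simp [max_eq_right h, ENNReal.ofReal_of_nonpos h]
      · simp [max_eq_left h]
    calc ENNReal.ofReal (∫ x, g x ∂μ) ≤ ENNReal.ofReal (∫ x, max (g x) 0 ∂μ) :=
          ENNReal.ofReal_le_ofReal h1
      _ = ∫⁻ x, ENNReal.ofReal (max (g x) 0) ∂μ := h2
      _ = ∫⁻ x, ENNReal.ofReal (g x) ∂μ := by simp only [h3]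
  · simp [integral_undef hg]
lemma tendsto_integral_abs_translate {g : ℝ → ℝ} (hg : Integrable g) :
    Tendsto (fun y : ℝ => ∫ x : ℝ, |g (x + y) - g x|) (nhds 0) (nhds 0) := by
  rw [Metric.tendsto_nhds]
  intro δ hδ
  obtain ⟨φ, φsupp, φapprox, φcont, φint⟩ :=
    hg.exists_hasCompactSupport_integral_sub_le (show (0:ℝ) < δ/8 by linarith)
  obtain ⟨R, hR⟩ := φsupp.isCompact.isBounded.subset_closedBall 0
  obtain ⟨Cb, hCb⟩ := φsupp.exists_bound_of_continuous φcont
  have hCb' : ∀ x, |φ x| ≤ Cb := fun x => by simpa using hCb x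
  have hφzero : ∀ x : ℝ, R < |x| → φ x = 0 := by
    intro x hx
    by_contra h
    have : x ∈ tsupport φ := subset_tsupport φ h
    have := hR this
    simp only [Metric.mem_closedBall, Real.dist_eq, sub_zero] at this
    linarith
  have hφtend : Tendsto (fun y : ℝ => ∫ x : ℝ, |φ (x + y) - φ x|) (nhds 0) (nhds 0) := by
    have hbound_int : Integrable ((Metric.closedBall (0:ℝ) (R+1)).indicator
        (fun _ => 2 * Cb)) := by
      apply (integrable_indicator_iff (measurableSet_closedBall)).2
      exact integrableOn_const (by simp [Real.volume_closedBall, ENNReal.mul_eq_top])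
    have h := MeasureTheory.tendsto_integral_filter_of_dominated_convergence
      (μ := (volume : Measure ℝ))
      (F := fun (y : ℝ) (x : ℝ) => |φ (x + y) - φ x|) (f := fun _ => (0:ℝ))
      (bound := (Metric.closedBall (0:ℝ) (R+1)).indicator (fun _ => 2 * Cb))
      (l := nhds 0) ?_ ?_ hbound_int ?_
    · simpa using h
    · exact Filter.Eventually.of_forall fun y =>
        (((φcont.comp (continuous_id.add continuous_const)).sub φcont).abs).aestronglyMeasurable
    · have hev : ∀ᶠ y : ℝ in nhds 0, |y| ≤ 1 := by
        have : Metric.closedBall (0:ℝ) 1 ∈ nhds (0:ℝ) := Metric.closedBall_mem_nhds 0 one_pos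
        filter_upwards [this] with y hy
        simpa [Real.dist_eq] using hy
      filter_upwards [hev] with y hy
      refine Filter.Eventually.of_forall fun x => ?_
      by_cases hx : x ∈ Metric.closedBall (0:ℝ) (R+1)
      · rw [indicator_of_mem hx]
        calc |(|φ (x + y) - φ x|)| = |φ (x + y) - φ x| := abs_abs _
          _ ≤ |φ (x + y)| + |φ x| := abs_sub _ _
          _ ≤ Cb + Cb := add_le_add (hCb' _) (hCb' _)
          _ = 2 * Cb := by ring
      · rw [indicator_of_notMem hx]
        have hx' : R + 1 < |x| := by
          simpa [Real.dist_eq] using hx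
        have h1 : φ x = 0 := hφzero x (by linarith)
        have h2 : φ (x + y) = 0 := by
          apply hφzero
          have h4 : |x| ≤ |x + y| + |y| := by
            have h5 := abs_add_le (x + y) (-y)
            simpa [abs_neg] using h5
          linarith
        simp [h1, h2]
    · refine Filter.Eventually.of_forall fun x => ?_
      have h1 : ContinuousAt (fun y : ℝ => φ (x + y)) 0 :=
        (φcont.comp (continuous_const.add continuous_id)).continuousAt
      have h2 : Tendsto (fun y : ℝ => |φ (x + y) - φ x|) (nhds 0)
          (nhds (|φ (x + 0) - φ x|)) := (h1.tendsto.sub tendsto_const_nhds).abs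
      simpa using h2
  -- main estimate
  have key : ∀ y : ℝ, ∫ x : ℝ, |g (x + y) - g x| ≤ δ/4 + ∫ x : ℝ, |φ (x + y) - φ x| := by
    intro y
    have i1 : Integrable (fun x : ℝ => g (x + y)) := hg.comp_add_right y
    have i2 : Integrable (fun x : ℝ => φ (x + y)) := φint.comp_add_right y
    have e1 : ∫ x : ℝ, |g (x + y) - φ (x + y)| = ∫ x : ℝ, |g x - φ x| :=
      integral_add_right_eq_self (fun x : ℝ => |g x - φ x|) y
    have iA : Integrable (fun x : ℝ => |g (x + y) - φ (x + y)|) := (i1.sub i2).abs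
    have iB : Integrable (fun x : ℝ => |φ (x + y) - φ x|) := (i2.sub φint).abs
    have iC : Integrable (fun x : ℝ => |φ x - g x|) := (φint.sub hg).abs
    have happrox : ∫ x : ℝ, |g x - φ x| ≤ δ/8 := by
      have := φapprox
      simpa [Real.norm_eq_abs] using this
    have iBC : Integrable (fun x : ℝ => |φ (x + y) - φ x| + |φ x - g x|) := iB.add iC
    have tri : ∀ x : ℝ, |g (x + y) - g x|
        ≤ |g (x + y) - φ (x + y)| + (|φ (x + y) - φ x| + |φ x - g x|) := by
      intro x
      have hx : g (x + y) - g x = (g (x+y) - φ (x+y)) + ((φ (x+y) - φ x) + (φ x - g x)) := by ring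
      rw [hx]
      exact (abs_add_le _ _).trans (by gcongr; exact abs_add_le _ _)
    have step1 : ∫ x : ℝ, |g (x + y) - g x|
        ≤ ∫ x : ℝ, (|g (x + y) - φ (x + y)| + (|φ (x + y) - φ x| + |φ x - g x|)) :=
      integral_mono ((i1.sub hg).abs) (iA.add iBC) tri
    have step2 : ∫ x : ℝ, (|g (x + y) - φ (x + y)| + (|φ (x + y) - φ x| + |φ x - g x|))
        = (∫ x : ℝ, |g (x + y) - φ (x + y)|) + ((∫ x : ℝ, |φ (x + y) - φ x|)
            + ∫ x : ℝ, |φ x - g x|) := by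
      rw [integral_add iA iBC, integral_add iB iC]
    have step3 : ∫ x : ℝ, |φ x - g x| = ∫ x : ℝ, |g x - φ x| := by
      have hfe : (fun x : ℝ => |φ x - g x|) = fun x : ℝ => |g x - φ x| :=
        funext fun x => abs_sub_comm _ _
      rw [hfe]
    have := happrox
    rw [step2, step3, e1] at step1
    linarith
  have hev2 : ∀ᶠ y : ℝ in nhds 0, ∫ x : ℝ, |φ (x + y) - φ x| < δ/2 := by
    have := Metric.tendsto_nhds.1 hφtend (δ/2) (by linarith)
    filter_upwards [this] with y hy
    have h0 : (0:ℝ) ≤ ∫ x : ℝ, |φ (x + y) - φ x| := integral_nonneg fun x => abs_nonneg _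
    rw [Real.dist_eq, sub_zero, abs_of_nonneg h0] at hy
    exact hy
  filter_upwards [hev2] with y hy
  have h0 : (0:ℝ) ≤ ∫ x : ℝ, |g (x + y) - g x| := integral_nonneg fun x => abs_nonneg _
  rw [Real.dist_eq, sub_zero, abs_of_nonneg h0]
  have := key y
  linarith
/-- Parametrized interval-integral with measurable endpoint is measurable. -/
lemma measurable_param_intervalIntegral {α : Type*} [MeasurableSpace α]
    (b : α → ℝ) (hb : Measurable b) (h : α × ℝ → ℝ) (hh : Measurable h) :
    Measurable fun a => ∫ y in (0:ℝ)..(b a), h (a, y) := by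
  have e : ∀ a, (∫ y in (0:ℝ)..(b a), h (a, y))
      = (∫ y, ({q : α × ℝ | q.2 ∈ Ioc 0 (b q.1)}.indicator h) (a, y))
        - ∫ y, ({q : α × ℝ | q.2 ∈ Ioc (b q.1) 0}.indicator h) (a, y) := by
    intro a
    have e1 : ∀ y : ℝ, ({q : α × ℝ | q.2 ∈ Ioc 0 (b q.1)}.indicator h) (a, y)
        = (Ioc 0 (b a)).indicator (fun y => h (a, y)) y := by
      intro y
      by_cases hy : y ∈ Ioc 0 (b a)
      · rw [indicator_of_mem hy, indicator_of_mem (by exact hy)]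
      · rw [indicator_of_notMem hy, indicator_of_notMem (by exact hy)]
    have e2 : ∀ y : ℝ, ({q : α × ℝ | q.2 ∈ Ioc (b q.1) 0}.indicator h) (a, y)
        = (Ioc (b a) 0).indicator (fun y => h (a, y)) y := by
      intro y
      by_cases hy : y ∈ Ioc (b a) 0
      · rw [indicator_of_mem hy, indicator_of_mem (by exact hy)]
      · rw [indicator_of_notMem hy, indicator_of_notMem (by exact hy)]
    simp_rw [e1, e2]
    rw [integral_indicator measurableSet_Ioc, integral_indicator measurableSet_Ioc]
    rfl
  simp_rw [e]
  have hs1 : MeasurableSet {q : α × ℝ | q.2 ∈ Ioc 0 (b q.1)} := by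
    apply MeasurableSet.inter
    · exact measurableSet_lt measurable_const measurable_snd
    · exact measurableSet_le measurable_snd (hb.comp measurable_fst)
  have hs2 : MeasurableSet {q : α × ℝ | q.2 ∈ Ioc (b q.1) 0} := by
    apply MeasurableSet.inter
    · exact measurableSet_lt (hb.comp measurable_fst) measurable_snd
    · exact measurableSet_le measurable_snd measurable_const
  have m1 := ((hh.indicator hs1).stronglyMeasurable.integral_prod_right'
    (ν := (volume : Measure ℝ))).measurable
  have m2 := ((hh.indicator hs2).stronglyMeasurable.integral_prod_right'
    (ν := (volume : Measure ℝ))).measurable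
  exact m1.sub m2

/-- Change of variables lower bound: pushing forward by a monotone map with derivative `≥ c`
on `S` costs at most a factor `c⁻¹`. -/
lemma cov_lintegral_le {c ε₀ : ℝ} (hc : 0 < c) (hε₀ : 0 < ε₀) {S : Set ℝ}
    (hS : MeasurableSet S) {Mt : ℝ → ℝ} (hmono : Monotone Mt)
    (hderiv : ∀ ζ ∈ S, ∃ d : ℝ, HasDerivAt Mt d ζ ∧ c ≤ d)
    (hquot : ∀ ζ ∈ S, ∀ ε : ℝ, 0 < ε → ε < ε₀ → c * ε ≤ Mt (ζ + ε) - Mt ζ)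
    (g : ℝ → ℝ≥0∞) (hg : Measurable g) :
    ∫⁻ ζ in S, g (Mt ζ) ≤ (ENNReal.ofReal c)⁻¹ * ∫⁻ x, g x := by
  choose! d hd1 hd2 using hderiv
  have hstrict : ∀ ζ₁ ∈ S, ∀ ζ₂ : ℝ, ζ₁ < ζ₂ → Mt ζ₁ < Mt ζ₂ := by
    intro ζ₁ h₁ ζ₂ h12
    by_cases he : ζ₂ - ζ₁ < ε₀
    · have := hquot ζ₁ h₁ (ζ₂ - ζ₁) (by linarith) he
      have h2 : ζ₁ + (ζ₂ - ζ₁) = ζ₂ := by ring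
      rw [h2] at this
      nlinarith
    · have h1 := hquot ζ₁ h₁ (ε₀/2) (by linarith) (by linarith)
      have h2 : Mt (ζ₁ + ε₀/2) ≤ Mt ζ₂ := hmono (by linarith)
      nlinarith
  have hinj : InjOn Mt S := by
    intro ζ₁ h₁ ζ₂ h₂ heq
    rcases lt_trichotomy ζ₁ ζ₂ with h | h | h
    · exact absurd heq (ne_of_lt (hstrict ζ₁ h₁ ζ₂ h))
    · exact h
    · exact absurd heq.symm (ne_of_lt (hstrict ζ₂ h₂ ζ₁ h))
  have hderivW : ∀ ζ ∈ S, HasFDerivWithinAt Mt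
      ((1 : ℝ →L[ℝ] ℝ).smulRight (d ζ)) S ζ := fun ζ hζ =>
    ((hd1 ζ hζ).hasDerivWithinAt).hasFDerivWithinAt
  have him := lintegral_image_eq_lintegral_abs_det_fderiv_mul volume hS hderivW hinj g
  simp only [ContinuousLinearMap.smulRight_one_eq_toSpanSingleton, ContinuousLinearMap.det_toSpanSingleton] at him
  have h1 : ENNReal.ofReal c * ∫⁻ ζ in S, g (Mt ζ) ≤ ∫⁻ x in Mt '' S, g x := by
    rw [him, ← lintegral_const_mul' _ _ ENNReal.ofReal_ne_top]
    refine lintegral_mono_ae ?_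
    filter_upwards [ae_restrict_mem hS] with ζ hζ
    have : c ≤ |d ζ| := le_trans (hd2 ζ hζ) (le_abs_self _)
    exact mul_le_mul_left (ENNReal.ofReal_le_ofReal this) _
  have h2 : ∫⁻ x in Mt '' S, g x ≤ ∫⁻ x, g x := setLIntegral_le_lintegral _ _
  have h3 : ENNReal.ofReal c * ∫⁻ ζ in S, g (Mt ζ) ≤ ∫⁻ x, g x := h1.trans h2
  have hc0 : (ENNReal.ofReal c) ≠ 0 := by simp [hc]
  calc ∫⁻ ζ in S, g (Mt ζ)
      = (ENNReal.ofReal c)⁻¹ * (ENNReal.ofReal c * ∫⁻ ζ in S, g (Mt ζ)) := by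
        rw [← mul_assoc, ENNReal.inv_mul_cancel hc0 ENNReal.ofReal_ne_top, one_mul]
    _ ≤ (ENNReal.ofReal c)⁻¹ * ∫⁻ x, g x := mul_le_mul_right h3 _

lemma favg_measurable (σ τ : ℝ) (hστ : σ ≤ τ) (M f : ℝ → ℝ → ℝ)
    (hM_meas : Measurable (fun p : ℝ × ℝ => M p.1 p.2))
    (hf_meas : Measurable (fun p : ℝ × ℝ => f p.1 p.2)) (ε : ℝ) :
    Measurable fun ζ => Favg σ τ M f ε ζ := by
  have hΔ : Measurable fun p : ℝ × ℝ => M p.2 (p.1 + ε) - M p.2 p.1 :=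
    (hM_meas.comp (measurable_snd.prodMk (measurable_fst.add_const ε))).sub
      (hM_meas.comp (measurable_snd.prodMk measurable_fst))
  have hMcomp : Measurable fun q : (ℝ × ℝ) × ℝ => M q.1.2 q.1.1 :=
    hM_meas.comp ((measurable_snd.comp measurable_fst).prodMk
      (measurable_fst.comp measurable_fst))
  have hh : Measurable fun q : (ℝ × ℝ) × ℝ =>
      |f q.1.2 (M q.1.2 q.1.1 + q.2) - f q.1.2 (M q.1.2 q.1.1)| := by
    apply Measurable.abs
    apply Measurable.sub
    · exact hf_meas.comp ((measurable_snd.comp measurable_fst).prodMk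
        (hMcomp.add measurable_snd))
    · exact hf_meas.comp ((measurable_snd.comp measurable_fst).prodMk hMcomp)
  have hA : Measurable fun p : ℝ × ℝ => (1 / (M p.2 (p.1 + ε) - M p.2 p.1)) *
      ∫ y in (0:ℝ)..(M p.2 (p.1 + ε) - M p.2 p.1),
        |f p.2 (M p.2 p.1 + y) - f p.2 (M p.2 p.1)| := by
    apply Measurable.mul
    · exact measurable_const.div hΔ
    · exact measurable_param_intervalIntegral _ hΔ _ hh
  have e : (fun ζ => Favg σ τ M f ε ζ) = fun ζ =>
      ∫ t in Ioc σ τ, (1 / (M t (ζ + ε) - M t ζ)) *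
        ∫ y in (0:ℝ)..(M t (ζ + ε) - M t ζ), |f t (M t ζ + y) - f t (M t ζ)| :=
    funext fun ζ => intervalIntegral.integral_of_le hστ
  rw [e]
  exact (hA.stronglyMeasurable.integral_prod_right'
    (ν := volume.restrict (Ioc σ τ))).measurable

/-- Averaged Lebesgue-point convergence along a monotone family of flow
maps `M_t` with two-sided quotient bounds `c·ε ≤ M_t(ζ+ε) − M_t(ζ) ≤ C·ε` on a set `S`:
the averaged oscillation of `f(t,·)` over the shrinking intervals
`[M_t(ζ), M_t(ζ+ε)]` tends to `0` in `L¹(S)`, and along a sequence `ε_k → 0⁺` it tends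
to `0` for almost every `ζ ∈ S`. -/
theorem averaged_lebesgue_point_convergence
    (T σ τ c C : ℝ) (hT : 0 < T) (hσ : 0 ≤ σ) (hστ : σ ≤ τ) (hτT : τ < T)
    (hc : 0 < c) (hcC : c ≤ C)
    (S : Set ℝ) (hS : MeasurableSet S)
    (ε₀ : ℝ) (hε₀ : 0 < ε₀)
    (M : ℝ → ℝ → ℝ)
    (hM_meas : Measurable (fun p : ℝ × ℝ => M p.1 p.2))
    (hM_mono : ∀ t ∈ Icc (0:ℝ) τ, Monotone (M t))
    (hM_deriv : ∀ ζ ∈ S, ∀ t ∈ Icc (0:ℝ) τ, ∃ d : ℝ, HasDerivAt (M t) d ζ ∧ c ≤ d)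
    (hM_quot : ∀ ζ ∈ S, ∀ ε : ℝ, 0 < ε → ε < ε₀ → ∀ t ∈ Icc (0:ℝ) τ,
      c * ε ≤ M t (ζ + ε) - M t ζ ∧ M t (ζ + ε) - M t ζ ≤ C * ε)
    (f : ℝ → ℝ → ℝ)
    (hf_meas : Measurable (fun p : ℝ × ℝ => f p.1 p.2))
    (hf_int : ∀ t ∈ Icc (0:ℝ) T, Integrable (f t))
    (hf_bdd : ∃ B : ℝ, ∀ t ∈ Icc (0:ℝ) T, (∫ y : ℝ, |f t y|) ≤ B) :
    Tendsto (fun ε : ℝ => ∫ ζ in S, ∫ t in σ..τ,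
        (1 / (M t (ζ + ε) - M t ζ)) *
          ∫ y in (0:ℝ)..(M t (ζ + ε) - M t ζ), |f t (M t ζ + y) - f t (M t ζ)|)
      (nhdsWithin 0 (Ioi 0)) (nhds 0) ∧
    ∃ εseq : ℕ → ℝ, (∀ k, 0 < εseq k) ∧ Tendsto εseq atTop (nhds 0) ∧
      ∀ᵐ ζ ∂(volume.restrict S),
        Tendsto (fun k : ℕ => ∫ t in σ..τ,
            (1 / (M t (ζ + εseq k) - M t ζ)) *
              ∫ y in (0:ℝ)..(M t (ζ + εseq k) - M t ζ),
                |f t (M t ζ + y) - f t (M t ζ)|)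
          atTop (nhds 0) := by
  obtain ⟨B, hB⟩ := hf_bdd
  have hC : 0 < C := lt_of_lt_of_le hc hcC
  have hB0 : 0 ≤ B := le_trans (integral_nonneg fun y => abs_nonneg _) (hB 0 ⟨le_rfl, hT.le⟩)
  have hsubT : ∀ t ∈ Icc σ τ, t ∈ Icc (0:ℝ) T := fun t ht => ⟨hσ.trans ht.1, ht.2.trans hτT.le⟩
  have hsubτ : ∀ t ∈ Icc σ τ, t ∈ Icc (0:ℝ) τ := fun t ht => ⟨hσ.trans ht.1, ht.2⟩
  have hIocIcc : ∀ t ∈ Ioc σ τ, t ∈ Icc σ τ := fun t ht => ⟨ht.1.le, ht.2⟩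
  have hft_meas : ∀ t : ℝ, Measurable (f t) := fun t =>
    hf_meas.comp (measurable_const.prodMk measurable_id)
  set W : ℝ → ℝ → ℝ≥0∞ := fun t y => ∫⁻ x : ℝ, ENNReal.ofReal |f t (x + y) - f t x|
    with hWdef
  set Ψ : ℝ → ℝ≥0∞ := fun y => ∫⁻ t in Ioc σ τ, W t y with hΨdef
  -- boundedness of W
  have hW_le : ∀ t ∈ Icc (0:ℝ) T, ∀ y : ℝ, W t y ≤ ENNReal.ofReal (B + B) := by
    intro t ht y
    have hm1 : Measurable fun x : ℝ => ENNReal.ofReal |f t (x + y)| :=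
      (((hft_meas t).comp (measurable_add_const y)).abs).ennreal_ofReal
    have h1 : ∀ x : ℝ, ENNReal.ofReal |f t (x + y) - f t x|
        ≤ ENNReal.ofReal |f t (x + y)| + ENNReal.ofReal |f t x| := fun x => by
      rw [← ENNReal.ofReal_add (abs_nonneg _) (abs_nonneg _)]
      exact ENNReal.ofReal_le_ofReal (abs_sub _ _)
    have h2 : ENNReal.ofReal (∫ x : ℝ, |f t x|) = ∫⁻ x : ℝ, ENNReal.ofReal |f t x| :=
      ofReal_integral_eq_lintegral_ofReal ((hf_int t ht).abs)
        (Eventually.of_forall fun x => abs_nonneg _)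
    calc W t y ≤ ∫⁻ x : ℝ, (ENNReal.ofReal |f t (x + y)| + ENNReal.ofReal |f t x|) :=
          lintegral_mono h1
      _ = (∫⁻ x : ℝ, ENNReal.ofReal |f t (x + y)|) + ∫⁻ x : ℝ, ENNReal.ofReal |f t x| :=
          lintegral_add_left hm1 _
      _ = (∫⁻ x : ℝ, ENNReal.ofReal |f t x|) + ∫⁻ x : ℝ, ENNReal.ofReal |f t x| := by
          rw [lintegral_add_right_eq_self (fun x => ENNReal.ofReal |f t x|) y]
      _ ≤ ENNReal.ofReal B + ENNReal.ofReal B := by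
          have h3 : (∫⁻ x : ℝ, ENNReal.ofReal |f t x|) ≤ ENNReal.ofReal B := by
            rw [← h2]; exact ENNReal.ofReal_le_ofReal (hB t ht)
          exact add_le_add h3 h3
      _ = ENNReal.ofReal (B + B) := (ENNReal.ofReal_add hB0 hB0).symm
  have hW_meas : ∀ y : ℝ, Measurable fun t => W t y := by
    intro y
    have hjoint : Measurable fun p : ℝ × ℝ => ENNReal.ofReal |f p.1 (p.2 + y) - f p.1 p.2| := by
      apply Measurable.ennreal_ofReal
      apply Measurable.abs
      exact (hf_meas.comp (measurable_fst.prodMk (measurable_snd.add_const y))).sub hf_meas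
    exact hjoint.lintegral_prod_right'
  have hW_tendsto : ∀ t ∈ Icc (0:ℝ) T, Tendsto (fun y => W t y) (nhds 0) (nhds 0) := by
    intro t ht
    have hint : Integrable (f t) := hf_int t ht
    have heq : ∀ y : ℝ, W t y = ENNReal.ofReal (∫ x : ℝ, |f t (x + y) - f t x|) := by
      intro y
      have hi : Integrable (fun x : ℝ => |f t (x + y) - f t x|) :=
        ((hint.comp_add_right y).sub hint).abs
      rw [ofReal_integral_eq_lintegral_ofReal hi
        (Eventually.of_forall fun x => abs_nonneg _)]
    simp_rw [heq]
    have h := ENNReal.tendsto_ofReal (tendsto_integral_abs_translate hint)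
    simpa using h
  have hΨ_tendsto : Tendsto Ψ (nhdsWithin 0 (Ioi 0)) (nhds 0) := by
    have h := tendsto_lintegral_filter_of_dominated_convergence
      (μ := volume.restrict (Ioc σ τ)) (bound := fun _ => ENNReal.ofReal (B + B))
      (F := fun y t => W t y) (f := fun _ => (0:ℝ≥0∞)) (l := nhdsWithin (0:ℝ) (Ioi 0))
      (Eventually.of_forall fun y => hW_meas y) ?_ ?_ ?_
    · simpa using h
    · refine Eventually.of_forall fun y => ?_
      filter_upwards [ae_restrict_mem measurableSet_Ioc] with t ht
      exact hW_le t (hsubT t (hIocIcc t ht)) y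
    · rw [lintegral_const]
      exact ENNReal.mul_ne_top ENNReal.ofReal_ne_top (measure_ne_top _ _)
    · filter_upwards [ae_restrict_mem measurableSet_Ioc] with t ht
      exact (hW_tendsto t (hsubT t (hIocIcc t ht))).mono_left nhdsWithin_le_nhds
  -- nonnegativity
  have hFnn : ∀ ε : ℝ, 0 < ε → ε < ε₀ → ∀ ζ ∈ S, 0 ≤ Favg σ τ M f ε ζ := by
    intro ε hε hε' ζ hζ
    apply intervalIntegral.integral_nonneg hστ
    intro t ht
    have hq := hM_quot ζ hζ ε hε hε' t (hsubτ t ht)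
    have hΔ : 0 < M t (ζ + ε) - M t ζ := lt_of_lt_of_le (by positivity) hq.1
    apply mul_nonneg (by positivity)
    exact intervalIntegral.integral_nonneg hΔ.le (fun y _ => abs_nonneg _)
  -- main bound
  have main : ∀ ε : ℝ, 0 < ε → ε < ε₀ →
      (∫⁻ ζ in S, ENNReal.ofReal (Favg σ τ M f ε ζ))
        ≤ ENNReal.ofReal (1/(c*ε)) * ((ENNReal.ofReal c)⁻¹ * ∫⁻ y in Ioc 0 (C*ε), Ψ y) := by
    intro ε hε hε'
    have stepAB : (∫⁻ ζ in S, ENNReal.ofReal (Favg σ τ M f ε ζ))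
        ≤ ∫⁻ ζ in S, ∫⁻ t in Ioc σ τ, (ENNReal.ofReal (1/(c*ε)) *
            ∫⁻ y in Ioc 0 (C*ε), ENNReal.ofReal |f t (M t ζ + y) - f t (M t ζ)|) := by
      refine lintegral_mono_ae ?_
      filter_upwards [ae_restrict_mem hS] with ζ hζ
      have e : Favg σ τ M f ε ζ = ∫ t in Ioc σ τ, ((1 / (M t (ζ + ε) - M t ζ)) *
          ∫ y in (0:ℝ)..(M t (ζ + ε) - M t ζ), |f t (M t ζ + y) - f t (M t ζ)|) :=
        intervalIntegral.integral_of_le hστ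
      have hA1 : ENNReal.ofReal (Favg σ τ M f ε ζ) ≤ ∫⁻ t in Ioc σ τ,
          ENNReal.ofReal ((1 / (M t (ζ + ε) - M t ζ)) *
            ∫ y in (0:ℝ)..(M t (ζ + ε) - M t ζ), |f t (M t ζ + y) - f t (M t ζ)|) := by
        rw [e]
        exact ofReal_integral_le_lintegral_ofReal' _ _
      refine hA1.trans (lintegral_mono_ae ?_)
      filter_upwards [ae_restrict_mem measurableSet_Ioc] with t ht
      have htτ : t ∈ Icc (0:ℝ) τ := ⟨hσ.trans ht.1.le, ht.2⟩
      have hq := hM_quot ζ hζ ε hε hε' t htτ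
      have hΔ1 : c * ε ≤ M t (ζ + ε) - M t ζ := hq.1
      have hΔ2 : M t (ζ + ε) - M t ζ ≤ C * ε := hq.2
      have hΔpos : 0 < M t (ζ + ε) - M t ζ := lt_of_lt_of_le (by positivity) hΔ1
      have hCε : (0:ℝ) ≤ C * ε := by positivity
      have htT : t ∈ Icc (0:ℝ) T := ⟨htτ.1, ht.2.trans hτT.le⟩
      have hfti : Integrable (f t) := hf_int t htT
      have hgint : IntegrableOn (fun y => |f t (M t ζ + y) - f t (M t ζ)|) (Ioc 0 (C*ε)) := by
        apply Integrable.abs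
        apply Integrable.sub
        · exact (hfti.comp_add_left (M t ζ)).integrableOn
        · exact integrableOn_const measure_Ioc_lt_top.ne
      have hii : IntervalIntegrable (fun y => |f t (M t ζ + y) - f t (M t ζ)|) volume 0 (C*ε) :=
        (intervalIntegrable_iff_integrableOn_Ioc_of_le hCε).2 hgint
      have hmono : (∫ y in (0:ℝ)..(M t (ζ + ε) - M t ζ), |f t (M t ζ + y) - f t (M t ζ)|)
          ≤ ∫ y in (0:ℝ)..(C*ε), |f t (M t ζ + y) - f t (M t ζ)| :=
        intervalIntegral.integral_mono_interval le_rfl hΔpos.le hΔ2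
          (Eventually.of_forall fun y => abs_nonneg _) hii
      have hnn : 0 ≤ ∫ y in (0:ℝ)..(M t (ζ + ε) - M t ζ), |f t (M t ζ + y) - f t (M t ζ)| :=
        intervalIntegral.integral_nonneg hΔpos.le fun y _ => abs_nonneg _
      have hreal : (1 / (M t (ζ + ε) - M t ζ)) *
            (∫ y in (0:ℝ)..(M t (ζ + ε) - M t ζ), |f t (M t ζ + y) - f t (M t ζ)|)
          ≤ (1 / (c*ε)) * ∫ y in (0:ℝ)..(C*ε), |f t (M t ζ + y) - f t (M t ζ)| := by
        apply mul_le_mul ?_ hmono hnn ?_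
        · exact one_div_le_one_div_of_le (by positivity) hΔ1
        · positivity
      calc ENNReal.ofReal ((1 / (M t (ζ + ε) - M t ζ)) *
            ∫ y in (0:ℝ)..(M t (ζ + ε) - M t ζ), |f t (M t ζ + y) - f t (M t ζ)|)
          ≤ ENNReal.ofReal ((1 / (c*ε)) *
              ∫ y in (0:ℝ)..(C*ε), |f t (M t ζ + y) - f t (M t ζ)|) :=
            ENNReal.ofReal_le_ofReal hreal
        _ = ENNReal.ofReal (1/(c*ε)) *
              ENNReal.ofReal (∫ y in (0:ℝ)..(C*ε), |f t (M t ζ + y) - f t (M t ζ)|) :=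
            ENNReal.ofReal_mul (by positivity)
        _ ≤ ENNReal.ofReal (1/(c*ε)) *
              ∫⁻ y in Ioc 0 (C*ε), ENNReal.ofReal |f t (M t ζ + y) - f t (M t ζ)| := by
            apply mul_le_mul_right
            rw [intervalIntegral.integral_of_le hCε]
            exact ofReal_integral_le_lintegral_ofReal' _ _
    -- measurability of the triple integrand
    have hMcomp : Measurable fun q : (ℝ × ℝ) × ℝ => M q.1.2 q.1.1 :=
      hM_meas.comp ((measurable_snd.comp measurable_fst).prodMk
        (measurable_fst.comp measurable_fst))
    have hG : Measurable fun q : (ℝ × ℝ) × ℝ =>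
        ENNReal.ofReal |f q.1.2 (M q.1.2 q.1.1 + q.2) - f q.1.2 (M q.1.2 q.1.1)| := by
      apply Measurable.ennreal_ofReal
      apply Measurable.abs
      apply Measurable.sub
      · exact hf_meas.comp ((measurable_snd.comp measurable_fst).prodMk
          (hMcomp.add measurable_snd))
      · exact hf_meas.comp ((measurable_snd.comp measurable_fst).prodMk hMcomp)
    have step2 : (∫⁻ ζ in S, ∫⁻ t in Ioc σ τ, (ENNReal.ofReal (1/(c*ε)) *
            ∫⁻ y in Ioc 0 (C*ε), ENNReal.ofReal |f t (M t ζ + y) - f t (M t ζ)|))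
        = ENNReal.ofReal (1/(c*ε)) * ∫⁻ ζ in S, ∫⁻ t in Ioc σ τ,
            ∫⁻ y in Ioc 0 (C*ε), ENNReal.ofReal |f t (M t ζ + y) - f t (M t ζ)| := by
      have e1 : ∀ ζ : ℝ, (∫⁻ t in Ioc σ τ, (ENNReal.ofReal (1/(c*ε)) *
            ∫⁻ y in Ioc 0 (C*ε), ENNReal.ofReal |f t (M t ζ + y) - f t (M t ζ)|))
          = ENNReal.ofReal (1/(c*ε)) * ∫⁻ t in Ioc σ τ,
              ∫⁻ y in Ioc 0 (C*ε), ENNReal.ofReal |f t (M t ζ + y) - f t (M t ζ)| :=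
        fun ζ => lintegral_const_mul' _ _ ENNReal.ofReal_ne_top
      rw [lintegral_congr e1]
      exact lintegral_const_mul' _ _ ENNReal.ofReal_ne_top
    have tonelli : (∫⁻ ζ in S, ∫⁻ t in Ioc σ τ,
            ∫⁻ y in Ioc 0 (C*ε), ENNReal.ofReal |f t (M t ζ + y) - f t (M t ζ)|)
        = ∫⁻ y in Ioc 0 (C*ε), ∫⁻ t in Ioc σ τ,
            ∫⁻ ζ in S, ENNReal.ofReal |f t (M t ζ + y) - f t (M t ζ)| := by
      have sw1 : ∀ ζ : ℝ, (∫⁻ t in Ioc σ τ,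
            ∫⁻ y in Ioc 0 (C*ε), ENNReal.ofReal |f t (M t ζ + y) - f t (M t ζ)|)
          = ∫⁻ y in Ioc 0 (C*ε), ∫⁻ t in Ioc σ τ,
              ENNReal.ofReal |f t (M t ζ + y) - f t (M t ζ)| := by
        intro ζ
        apply lintegral_lintegral_swap
        have : Measurable fun q : ℝ × ℝ =>
            ENNReal.ofReal |f q.1 (M q.1 ζ + q.2) - f q.1 (M q.1 ζ)| := by
          exact hG.comp ((measurable_const.prodMk measurable_fst).prodMk measurable_snd)
        exact this.aemeasurable
      rw [lintegral_congr sw1]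
      have hH : Measurable fun p : ℝ × ℝ => ∫⁻ t in Ioc σ τ,
          ENNReal.ofReal |f t (M t p.1 + p.2) - f t (M t p.1)| := by
        have hre : Measurable fun q : (ℝ × ℝ) × ℝ =>
            ENNReal.ofReal |f q.2 (M q.2 q.1.1 + q.1.2) - f q.2 (M q.2 q.1.1)| :=
          hG.comp (((measurable_fst.comp measurable_fst).prodMk measurable_snd).prodMk
            (measurable_snd.comp measurable_fst))
        exact hre.lintegral_prod_right'
      rw [lintegral_lintegral_swap hH.aemeasurable]
      refine lintegral_congr fun y => ?_
      apply lintegral_lintegral_swap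
      have : Measurable fun q : ℝ × ℝ =>
          ENNReal.ofReal |f q.2 (M q.2 q.1 + y) - f q.2 (M q.2 q.1)| :=
        hG.comp (measurable_id.prodMk measurable_const)
      exact this.aemeasurable
    have inner_bound : ∀ y : ℝ, (∫⁻ t in Ioc σ τ,
          ∫⁻ ζ in S, ENNReal.ofReal |f t (M t ζ + y) - f t (M t ζ)|)
        ≤ (ENNReal.ofReal c)⁻¹ * Ψ y := by
      intro y
      have h1 : ∀ᵐ t ∂(volume.restrict (Ioc σ τ)),
          (∫⁻ ζ in S, ENNReal.ofReal |f t (M t ζ + y) - f t (M t ζ)|)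
            ≤ (ENNReal.ofReal c)⁻¹ * W t y := by
        filter_upwards [ae_restrict_mem measurableSet_Ioc] with t ht
        have htτ : t ∈ Icc (0:ℝ) τ := ⟨hσ.trans ht.1.le, ht.2⟩
        have hgm : Measurable fun x : ℝ => ENNReal.ofReal |f t (x + y) - f t x| :=
          ((((hft_meas t).comp (measurable_add_const y)).sub (hft_meas t)).abs).ennreal_ofReal
        exact cov_lintegral_le hc hε₀ hS (hM_mono t htτ)
          (fun ζ hζ => hM_deriv ζ hζ t htτ)
          (fun ζ hζ e he he' => (hM_quot ζ hζ e he he' t htτ).1)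
          (fun x => ENNReal.ofReal |f t (x + y) - f t x|) hgm
      have hcinv : ((ENNReal.ofReal c)⁻¹ : ℝ≥0∞) ≠ ⊤ :=
        ENNReal.inv_ne_top.2 (ne_of_gt (ENNReal.ofReal_pos.2 hc))
      calc (∫⁻ t in Ioc σ τ, ∫⁻ ζ in S, ENNReal.ofReal |f t (M t ζ + y) - f t (M t ζ)|)
          ≤ ∫⁻ t in Ioc σ τ, (ENNReal.ofReal c)⁻¹ * W t y := lintegral_mono_ae h1
        _ = (ENNReal.ofReal c)⁻¹ * Ψ y := lintegral_const_mul' _ _ hcinv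
    have final : (∫⁻ y in Ioc 0 (C*ε), ∫⁻ t in Ioc σ τ,
          ∫⁻ ζ in S, ENNReal.ofReal |f t (M t ζ + y) - f t (M t ζ)|)
        ≤ (ENNReal.ofReal c)⁻¹ * ∫⁻ y in Ioc 0 (C*ε), Ψ y := by
      have hcinv : ((ENNReal.ofReal c)⁻¹ : ℝ≥0∞) ≠ ⊤ :=
        ENNReal.inv_ne_top.2 (ne_of_gt (ENNReal.ofReal_pos.2 hc))
      calc (∫⁻ y in Ioc 0 (C*ε), ∫⁻ t in Ioc σ τ,
            ∫⁻ ζ in S, ENNReal.ofReal |f t (M t ζ + y) - f t (M t ζ)|)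
          ≤ ∫⁻ y in Ioc 0 (C*ε), (ENNReal.ofReal c)⁻¹ * Ψ y :=
            lintegral_mono fun y => inner_bound y
        _ = (ENNReal.ofReal c)⁻¹ * ∫⁻ y in Ioc 0 (C*ε), Ψ y :=
            lintegral_const_mul' _ _ hcinv
    calc (∫⁻ ζ in S, ENNReal.ofReal (Favg σ τ M f ε ζ))
        ≤ ∫⁻ ζ in S, ∫⁻ t in Ioc σ τ, (ENNReal.ofReal (1/(c*ε)) *
            ∫⁻ y in Ioc 0 (C*ε), ENNReal.ofReal |f t (M t ζ + y) - f t (M t ζ)|) := stepAB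
      _ = ENNReal.ofReal (1/(c*ε)) * ∫⁻ ζ in S, ∫⁻ t in Ioc σ τ,
            ∫⁻ y in Ioc 0 (C*ε), ENNReal.ofReal |f t (M t ζ + y) - f t (M t ζ)| := step2
      _ = ENNReal.ofReal (1/(c*ε)) * ∫⁻ y in Ioc 0 (C*ε), ∫⁻ t in Ioc σ τ,
            ∫⁻ ζ in S, ENNReal.ofReal |f t (M t ζ + y) - f t (M t ζ)| := by rw [tonelli]
      _ ≤ ENNReal.ofReal (1/(c*ε)) * ((ENNReal.ofReal c)⁻¹ * ∫⁻ y in Ioc 0 (C*ε), Ψ y) :=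
            mul_le_mul_right final _
  -- eventual smallness
  have hsmall : ∀ δ : ℝ, 0 < δ → ∀ᶠ ε in nhdsWithin (0:ℝ) (Ioi 0),
      0 < ε ∧ ε < ε₀ ∧ (∫⁻ ζ in S, ENNReal.ofReal (Favg σ τ M f ε ζ)) ≤ ENNReal.ofReal δ := by
    intro δ hδ
    set δ' := δ * c^2 / (2*C) with hδ'def
    have hδ' : 0 < δ' := by positivity
    have hev : ∀ᶠ y in nhdsWithin (0:ℝ) (Ioi 0), Ψ y < ENNReal.ofReal δ' :=
      hΨ_tendsto.eventually_lt_const (ENNReal.ofReal_pos.2 hδ')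
    obtain ⟨η, hη0, hηsub⟩ := Metric.mem_nhdsWithin_iff.1 hev
    have hmem : Ioo (0:ℝ) (min ε₀ (η / C)) ∈ nhdsWithin (0:ℝ) (Ioi 0) :=
      Ioo_mem_nhdsGT_of_mem ⟨le_rfl, by positivity⟩
    filter_upwards [hmem] with ε hεmem
    obtain ⟨hε1, hε2⟩ := hεmem
    have hεε₀ : ε < ε₀ := lt_of_lt_of_le hε2 (min_le_left _ _)
    have hεη : C * ε < η := by
      have h := lt_of_lt_of_le hε2 (min_le_right _ _)
      calc C * ε < C * (η / C) := by
            exact mul_lt_mul_of_pos_left h hC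
        _ = η := by field_simp
    refine ⟨hε1, hεε₀, ?_⟩
    have hb1 : (∫⁻ y in Ioc 0 (C*ε), Ψ y) ≤ ENNReal.ofReal δ' * ENNReal.ofReal (C*ε) := by
      have hsubset : ∀ y ∈ Ioc (0:ℝ) (C*ε), Ψ y ≤ ENNReal.ofReal δ' := by
        intro y hy
        apply le_of_lt
        apply hηsub
        constructor
        · simp only [Metric.mem_ball, Real.dist_eq, sub_zero]
          rw [abs_of_pos hy.1]
          exact lt_of_le_of_lt hy.2 hεη
        · exact hy.1
      calc (∫⁻ y in Ioc 0 (C*ε), Ψ y) ≤ ∫⁻ _ in Ioc (0:ℝ) (C*ε), ENNReal.ofReal δ' := by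
            apply lintegral_mono_ae
            filter_upwards [ae_restrict_mem measurableSet_Ioc] with y hy
            exact hsubset y hy
        _ = ENNReal.ofReal δ' * volume (Ioc (0:ℝ) (C*ε)) := setLIntegral_const _ _
        _ = ENNReal.ofReal δ' * ENNReal.ofReal (C*ε) := by rw [Real.volume_Ioc, sub_zero]
    have hchain := (main ε hε1 hεε₀).trans
      (mul_le_mul_right (mul_le_mul_right hb1 _) _)
    have heq : ENNReal.ofReal (1/(c*ε)) * ((ENNReal.ofReal c)⁻¹ *
          (ENNReal.ofReal δ' * ENNReal.ofReal (C*ε)))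
        = ENNReal.ofReal ((1/(c*ε)) * (c⁻¹ * (δ' * (C*ε)))) := by
      rw [← ENNReal.ofReal_inv_of_pos hc]
      rw [← ENNReal.ofReal_mul (by positivity : (0:ℝ) ≤ δ')]
      rw [← ENNReal.ofReal_mul (by positivity : (0:ℝ) ≤ c⁻¹)]
      rw [← ENNReal.ofReal_mul (by positivity : (0:ℝ) ≤ 1/(c*ε))]
    have hval : (1/(c*ε)) * (c⁻¹ * (δ' * (C*ε))) = δ / 2 := by
      rw [hδ'def]
      field_simp
    rw [heq, hval] at hchain
    exact hchain.trans (ENNReal.ofReal_le_ofReal (by linarith))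
  -- part 1
  have goal1 : Tendsto (fun ε : ℝ => ∫ ζ in S, Favg σ τ M f ε ζ)
      (nhdsWithin (0:ℝ) (Ioi 0)) (nhds 0) := by
    rw [Metric.tendsto_nhds]
    intro δ hδ
    filter_upwards [hsmall (δ/2) (by linarith)] with ε hε
    obtain ⟨hε1, hε2, hε3⟩ := hε
    have h4 : ENNReal.ofReal (∫ ζ in S, Favg σ τ M f ε ζ)
        ≤ ∫⁻ ζ in S, ENNReal.ofReal (Favg σ τ M f ε ζ) :=
      ofReal_integral_le_lintegral_ofReal' _ _
    have h5 : (∫ ζ in S, Favg σ τ M f ε ζ) ≤ δ/2 := by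
      have h6 := h4.trans hε3
      rwa [ENNReal.ofReal_le_ofReal_iff (by linarith)] at h6
    have h7 : 0 ≤ ∫ ζ in S, Favg σ τ M f ε ζ :=
      setIntegral_nonneg hS (fun ζ hζ => hFnn ε hε1 hε2 ζ hζ)
    rw [Real.dist_eq, sub_zero, abs_of_nonneg h7]
    linarith
  constructor
  · exact goal1
  -- part 2
  have hseq : ∀ k : ℕ, ∃ ε : ℝ, 0 < ε ∧ ε < ε₀ ∧ ε < 1/((k:ℝ)+1) ∧
      (∫⁻ ζ in S, ENNReal.ofReal (Favg σ τ M f ε ζ)) ≤ ENNReal.ofReal ((1/2:ℝ)^k) := by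
    intro k
    have h1 := hsmall ((1/2:ℝ)^k) (by positivity)
    have h2 : Ioo (0:ℝ) (1/((k:ℝ)+1)) ∈ nhdsWithin (0:ℝ) (Ioi 0) :=
      Ioo_mem_nhdsGT_of_mem ⟨le_rfl, by positivity⟩
    obtain ⟨ε, hε, hIoo⟩ := (h1.and (eventually_of_mem h2 (fun x hx => hx))).exists
    exact ⟨ε, hε.1, hε.2.1, hIoo.2, hε.2.2⟩
  choose εs hεs1 hεs2 hεs3 hεs4 using hseq
  refine ⟨εs, hεs1, ?_, ?_⟩
  · refine squeeze_zero (fun k => (hεs1 k).le) (fun k => (hεs3 k).le) ?_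
    exact tendsto_one_div_add_atTop_nhds_zero_nat
  · have hmeasF : ∀ k : ℕ, Measurable (fun ζ => ENNReal.ofReal (Favg σ τ M f (εs k) ζ)) :=
      fun k => (favg_measurable σ τ hστ M f hM_meas hf_meas (εs k)).ennreal_ofReal
    have htsum : (∫⁻ ζ in S, ∑' k, ENNReal.ofReal (Favg σ τ M f (εs k) ζ)) ≠ ⊤ := by
      rw [lintegral_tsum (fun k => (hmeasF k).aemeasurable)]
      refine ne_top_of_le_ne_top ?_ (ENNReal.tsum_le_tsum fun k => hεs4 k)
      have he : ∀ k : ℕ, ENNReal.ofReal ((1/2:ℝ)^k) = (ENNReal.ofReal (1/2))^k :=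
        fun k => ENNReal.ofReal_pow (by norm_num) k
      rw [tsum_congr he, ENNReal.tsum_geometric]
      apply ENNReal.inv_ne_top.2
      rw [ne_eq, tsub_eq_zero_iff_le, not_le]
      exact ENNReal.ofReal_lt_one.2 (by norm_num)
    have hae := ae_lt_top' (Measurable.ennreal_tsum hmeasF).aemeasurable htsum
    filter_upwards [hae, ae_restrict_mem hS] with ζ hζ1 hζ2
    have h1 : Tendsto (fun k => ENNReal.ofReal (Favg σ τ M f (εs k) ζ)) atTop (nhds 0) :=
      ENNReal.tendsto_atTop_zero_of_tsum_ne_top hζ1.ne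
    have h2 : Tendsto (fun k => (ENNReal.ofReal (Favg σ τ M f (εs k) ζ)).toReal)
        atTop (nhds 0) := by
      have h3 := (ENNReal.tendsto_toReal (by simp : (0:ℝ≥0∞) ≠ ⊤)).comp h1
      simpa [Function.comp_def] using h3
    have h3 : ∀ k, (ENNReal.ofReal (Favg σ τ M f (εs k) ζ)).toReal = Favg σ τ M f (εs k) ζ :=
      fun k => ENNReal.toReal_ofReal (hFnn (εs k) (hεs1 k) (hεs2 k) ζ hζ2)
    simp_rw [h3] at h2
    exact h2
end
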